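/- arXiv:2307.08203 — 7 statements merged into one kernel-verified Lean document; each statement's English description precedes it below -/
import Mathlib

section
/- Let D = (D₁, …, D_J)ᵀ be a J-dimensional standard normal random vector N(0_J, I_J) and let a > 0 (so that P(DᵀD < a) > 0). Then for every t ≥ 0, P(|D₁| ≤ t | DᵀD < a) ≥ P(|D₁| ≤ t); that is, the truncated normal ℒ ~ D₁ | {DᵀD < a} is more peaked than a standard normal random variable. -/
open MeasureTheory ProbabilityTheory
open scoped ProbabilityTheory

/-- The standard Gaussian measure on `ℝ^J`: the product of `J` standard normals. -/
noncomputable def stdGaussian (J : ℕ) : Measure (Fin J → ℝ) :=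
  Measure.pi (fun _ => gaussianReal 0 1)

lemma gaussianReal_openPos : (gaussianReal 0 1).IsOpenPosMeasure :=
  ⟨fun _U hU hne h =>
    hU.measure_ne_zero volume hne (gaussianReal_absolutelyContinuous' 0 one_ne_zero h)⟩

/-- For a `J`-dimensional standard normal vector `D` and `a > 0`, the truncated normal
`ℒ ~ D₁ | {DᵀD < a}` is more peaked than a standard normal: for every `t ≥ 0`,
`P(|D₁| ≤ t | DᵀD < a) ≥ P(|D₁| ≤ t)`. -/
theorem truncatedNormal_lt_morePeaked_than_stdNormal
    (J : ℕ) (hJ : 0 < J) (a : ℝ) (ha : 0 < a) (t : ℝ) (ht : 0 ≤ t) :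
    gaussianReal 0 1 {y : ℝ | |y| ≤ t}
      ≤ (stdGaussian J)[|{x | ∑ i, (x i) ^ 2 < a}] {x | |x ⟨0, hJ⟩| ≤ t} := by
  obtain ⟨n, rfl⟩ : ∃ n, J = n + 1 := ⟨J - 1, (Nat.succ_pred_eq_of_pos hJ).symm⟩
  have : (gaussianReal 0 1).IsOpenPosMeasure := gaussianReal_openPos
  set γ : Measure ℝ := gaussianReal 0 1 with hγ
  set ρ : Measure (Fin n → ℝ) := Measure.pi (fun _ => γ) with hρ
  set μ : Measure (Fin (n+1) → ℝ) := stdGaussian (n+1) with hμ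
  have hμprob : IsProbabilityMeasure μ := by
    rw [hμ]; unfold _root_.stdGaussian; infer_instance
  have hρprob : IsProbabilityMeasure ρ := by rw [hρ]; infer_instance
  have hμpos : μ.IsOpenPosMeasure := by
    rw [hμ]; unfold _root_.stdGaussian; infer_instance
  -- sets
  set S : Set (Fin (n+1) → ℝ) := {x | ∑ i, (x i) ^ 2 < a} with hS
  set A : Set (Fin (n+1) → ℝ) := {x | |x ⟨0, hJ⟩| ≤ t} with hA
  set B : Set ℝ := {y : ℝ | |y| ≤ t} with hB
  have hBm : MeasurableSet B := measurableSet_le (measurable_norm) measurable_const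
  have hsum_meas : Measurable fun x : Fin (n+1) → ℝ => ∑ i, (x i) ^ 2 :=
    Finset.measurable_sum _ fun i _ => (measurable_pi_apply i).pow_const 2
  have hSm : MeasurableSet S := measurableSet_lt hsum_meas measurable_const
  have hAm : MeasurableSet A :=
    measurableSet_le (measurable_pi_apply _).norm measurable_const
  -- positivity and finiteness of μ S
  have hSopen : IsOpen S := by
    have : Continuous fun x : Fin (n+1) → ℝ => ∑ i, (x i) ^ 2 :=
      continuous_finset_sum _ fun i _ => (continuous_apply i).pow 2
    exact isOpen_lt this continuous_const
  have hSne : S.Nonempty := ⟨0, by simpa [hS] using ha⟩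
  have hS0 : μ S ≠ 0 := hSopen.measure_ne_zero μ hSne
  have hStop : μ S ≠ ⊤ := measure_ne_top μ S
  -- reduce conditioning
  rw [cond_apply hSm]
  rw [mul_comm, ← div_eq_mul_inv, ENNReal.le_div_iff_mul_le (Or.inl hS0) (Or.inl hStop)]
  -- transfer to product measure
  set e := MeasurableEquiv.piFinSuccAbove (fun _ : Fin (n+1) => ℝ) 0 with he
  have hmp : MeasurePreserving e μ (γ.prod ρ) := by
    rw [hμ, hγ, hρ]
    exact measurePreserving_piFinSuccAbove (fun _ => gaussianReal 0 1) 0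
  set S' : Set (ℝ × (Fin n → ℝ)) := {p | p.1 ^ 2 + ∑ j, (p.2 j) ^ 2 < a} with hS'
  set A' : Set (ℝ × (Fin n → ℝ)) := {p | |p.1| ≤ t} with hA'
  have hsum_meas' : Measurable fun p : ℝ × (Fin n → ℝ) => p.1 ^ 2 + ∑ j, (p.2 j) ^ 2 :=
    (measurable_fst.pow_const 2).add
      (Finset.measurable_sum _ fun j _ => ((measurable_pi_apply j).comp measurable_snd).pow_const 2)
  have hS'm : MeasurableSet S' := measurableSet_lt hsum_meas' measurable_const
  have hA'm : MeasurableSet A' := measurableSet_le measurable_fst.norm measurable_const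
  have hSeq : S = e ⁻¹' S' := by
    ext x
    simp only [hS, hS', Set.mem_setOf_eq, Set.mem_preimage, he]
    have : (MeasurableEquiv.piFinSuccAbove (fun _ : Fin (n+1) => ℝ) 0) x
        = (x 0, fun j => x j.succ) := rfl
    rw [this]
    rw [Fin.sum_univ_succ]
  have hAeq : A = e ⁻¹' A' := by
    ext x
    simp only [hA, hA', Set.mem_setOf_eq, Set.mem_preimage, he]
    have : (MeasurableEquiv.piFinSuccAbove (fun _ : Fin (n+1) => ℝ) 0) x
        = (x 0, fun j => x j.succ) := rfl
    rw [this]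
    have h0 : (⟨0, hJ⟩ : Fin (n+1)) = 0 := rfl
    rw [h0]
  have hμS : μ S = (γ.prod ρ) S' := by
    rw [hSeq]; exact hmp.measure_preimage hS'm.nullMeasurableSet
  have hμSA : μ (S ∩ A) = (γ.prod ρ) (S' ∩ A') := by
    rw [hSeq, hAeq, ← Set.preimage_inter]
    exact hmp.measure_preimage (hS'm.inter hA'm).nullMeasurableSet
  rw [hμS, hμSA]
  -- slice function
  set K : ℝ → ENNReal := fun y => ρ {z : Fin n → ℝ | y ^ 2 + ∑ j, (z j) ^ 2 < a} with hK
  have hKmeas : Measurable K :=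
    measurable_measure_prodMk_left (ν := ρ) hS'm
  have hprodS' : (γ.prod ρ) S' = ∫⁻ y, K y ∂γ := by
    rw [Measure.prod_apply hS'm]; rfl
  have hprodSA : (γ.prod ρ) (S' ∩ A') = ∫⁻ y in B, K y ∂γ := by
    rw [Measure.prod_apply (hS'm.inter hA'm), ← lintegral_indicator hBm]
    congr 1 with y
    by_cases hy : y ∈ B
    · have : Prod.mk y ⁻¹' (S' ∩ A') = {z : Fin n → ℝ | y ^ 2 + ∑ j, (z j) ^ 2 < a} := by
        ext z
        simp only [Set.mem_preimage, Set.mem_inter_iff, hS', hA', Set.mem_setOf_eq]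
        exact ⟨fun h => h.1, fun h => ⟨h, hy⟩⟩
      rw [this, Set.indicator_of_mem hy]
    · have : Prod.mk y ⁻¹' (S' ∩ A') = (∅ : Set (Fin n → ℝ)) := by
        ext z
        simp only [Set.mem_preimage, Set.mem_inter_iff, hS', hA', Set.mem_setOf_eq,
          Set.mem_empty_iff_false, iff_false, not_and]
        exact fun _ => hy
      rw [this, Set.indicator_of_notMem hy]
      simp
  rw [hprodS', hprodSA]
  -- the correlation inequality
  set c : ENNReal := K t with hc
  have hKB : ∀ y ∈ B, c ≤ K y := by
    intro y hy
    refine measure_mono fun z hz => ?_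
    simp only [Set.mem_setOf_eq] at hz ⊢
    have hy2 : y ^ 2 ≤ t ^ 2 := by
      rw [← sq_abs y, ← sq_abs t]
      exact pow_le_pow_left₀ (abs_nonneg y) (le_trans hy (le_abs_self t)) 2
    linarith
  have hKBc : ∀ y ∉ B, K y ≤ c := by
    intro y hy
    refine measure_mono fun z hz => ?_
    simp only [Set.mem_setOf_eq] at hz ⊢
    have hy' : t < |y| := lt_of_not_ge hy
    have hy2 : t ^ 2 ≤ y ^ 2 := by
      rw [← sq_abs y, ← sq_abs t]
      exact pow_le_pow_left₀ (abs_nonneg t) (by rw [abs_of_nonneg ht]; exact hy'.le) 2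
    linarith
  have h1 : ∫⁻ y in Bᶜ, K y ∂γ ≤ c * γ Bᶜ := by
    calc ∫⁻ y in Bᶜ, K y ∂γ ≤ ∫⁻ _ in Bᶜ, c ∂γ :=
          setLIntegral_mono measurable_const fun y hy => hKBc y hy
      _ = c * γ Bᶜ := setLIntegral_const _ _
  have h2 : c * γ B ≤ ∫⁻ y in B, K y ∂γ := by
    calc c * γ B = ∫⁻ _ in B, c ∂γ := (setLIntegral_const _ _).symm
      _ ≤ ∫⁻ y in B, K y ∂γ := setLIntegral_mono hKmeas fun y hy => hKB y hy
  calc γ B * ∫⁻ y, K y ∂γ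
      = γ B * ((∫⁻ y in B, K y ∂γ) + ∫⁻ y in Bᶜ, K y ∂γ) := by
        rw [lintegral_add_compl _ hBm]
    _ = γ B * (∫⁻ y in B, K y ∂γ) + γ B * ∫⁻ y in Bᶜ, K y ∂γ := by ring
    _ ≤ γ B * (∫⁻ y in B, K y ∂γ) + γ B * (c * γ Bᶜ) := by
        gcongr
    _ = γ B * (∫⁻ y in B, K y ∂γ) + γ Bᶜ * (c * γ B) := by ring
    _ ≤ γ B * (∫⁻ y in B, K y ∂γ) + γ Bᶜ * ∫⁻ y in B, K y ∂γ := by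
        gcongr
    _ = (γ B + γ Bᶜ) * ∫⁻ y in B, K y ∂γ := by ring
    _ = ∫⁻ y in B, K y ∂γ := by
        rw [measure_add_measure_compl hBm, measure_univ, one_mul]
end

section
/- Let D = (D₁, …, D_J)ᵀ be a J-dimensional standard normal random vector N(0_J, I_J) and let a ≥ 0 (so that P(DᵀD ≥ a) > 0). Then for every t ≥ 0, P(|D₁| ≤ t | DᵀD ≥ a) ≤ P(|D₁| ≤ t); that is, a standard normal random variable is more peaked than the truncated normal ℒ′ ~ D₁ | {DᵀD ≥ a}. -/
open MeasureTheory ProbabilityTheory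
open scoped ProbabilityTheory

instance stdGaussian_isProbabilityMeasure (J : ℕ) : IsProbabilityMeasure (stdGaussian J) := by
  unfold _root_.stdGaussian; infer_instance

/-- One-dimensional negative association: for any probability measure on `ℝ`,
the events `{c ≤ x²}` and `{|x| ≤ t}` are negatively correlated. -/
lemma oneDim_neg_assoc (μ : Measure ℝ) [IsProbabilityMeasure μ] (c t : ℝ) :
    μ ({x : ℝ | c ≤ x ^ 2} ∩ {x : ℝ | |x| ≤ t})
      ≤ μ {x : ℝ | c ≤ x ^ 2} * μ {x : ℝ | |x| ≤ t} := by
  by_cases hc : c ≤ 0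
  · have hU : {x : ℝ | c ≤ x ^ 2} = Set.univ := by
      ext x; simpa using hc.trans (sq_nonneg x)
    simp [hU]
  push_neg at hc
  set s := Real.sqrt c with hs
  have hSeq : {x : ℝ | c ≤ x ^ 2} = {x : ℝ | s ≤ |x|} := by
    ext x
    simp only [Set.mem_setOf_eq, hs]
    rw [show (s ≤ |x|) = (Real.sqrt c ≤ |x|) from rfl, Real.sqrt_le_iff]
    simp [sq_abs, abs_nonneg, and_comm]
  rw [hSeq]
  by_cases hts : t < s
  · have : {x : ℝ | s ≤ |x|} ∩ {x : ℝ | |x| ≤ t} = ∅ := by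
      ext x
      simp only [Set.mem_inter_iff, Set.mem_setOf_eq, Set.mem_empty_iff_false, iff_false]
      rintro ⟨h1, h2⟩
      exact absurd (h1.trans h2) (not_le.2 hts)
    simp [this]
  push_neg at hts
  set D : Set ℝ := {x : ℝ | |x| < s} with hD
  have hDmeas : MeasurableSet D := measurableSet_lt (measurable_id.abs) measurable_const
  have hTmeas : MeasurableSet {x : ℝ | |x| ≤ t} :=
    measurableSet_le (measurable_id.abs) measurable_const
  have hSc : {x : ℝ | s ≤ |x|} = Dᶜ := by
    ext x; simp [hD, not_lt]
  have hsub : D ⊆ {x : ℝ | |x| ≤ t} := fun x hx => le_of_lt (lt_of_lt_of_le hx hts)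
  have hdiff : Dᶜ ∩ {x : ℝ | |x| ≤ t} = {x : ℝ | |x| ≤ t} \ D := by
    ext x; simp [Set.mem_diff, and_comm]
  rw [hSc, hdiff, measure_diff hsub hDmeas.nullMeasurableSet (measure_ne_top μ D),
    prob_compl_eq_one_sub hDmeas]
  rw [ENNReal.sub_mul (fun _ _ => measure_ne_top μ _), one_mul]
  exact tsub_le_tsub_left (mul_le_of_le_one_right' prob_le_one) _

/-- For a `J`-dimensional standard normal vector `D` and `a ≥ 0`, a standard normal is more
peaked than the truncated normal `ℒ′ ~ D₁ | {DᵀD ≥ a}`: for every `t ≥ 0`,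
`P(|D₁| ≤ t | DᵀD ≥ a) ≤ P(|D₁| ≤ t)`. -/
theorem stdNormal_morePeaked_than_truncatedNormal_ge
    (J : ℕ) (hJ : 0 < J) (a : ℝ) (ha : 0 ≤ a) (t : ℝ) (ht : 0 ≤ t) :
    (stdGaussian J)[|{x | a ≤ ∑ i, (x i) ^ 2}] {x | |x ⟨0, hJ⟩| ≤ t}
      ≤ gaussianReal 0 1 {y : ℝ | |y| ≤ t} := by
  obtain ⟨n, rfl⟩ : ∃ n, J = n + 1 := ⟨J - 1, (Nat.succ_pred_eq_of_pos hJ).symm⟩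
  set ν : Measure ℝ := gaussianReal 0 1 with hν
  set π : Measure (Fin n → ℝ) := Measure.pi (fun _ => ν) with hπ
  set A : Set (Fin (n + 1) → ℝ) := {x | a ≤ ∑ i, (x i) ^ 2} with hA
  set B : Set (Fin (n + 1) → ℝ) := {x | |x ⟨0, hJ⟩| ≤ t} with hB
  set T : Set ℝ := {y : ℝ | |y| ≤ t} with hT
  have hAmeas : MeasurableSet A :=
    measurableSet_le measurable_const (by fun_prop)
  have hAB : MeasurableSet (A ∩ B) :=
    hAmeas.inter (measurableSet_le (by fun_prop) measurable_const)
  -- the splitting equivalence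
  set e := MeasurableEquiv.piFinSuccAbove (fun _ : Fin (n + 1) => ℝ) 0 with he
  have hmp : MeasurePreserving e (stdGaussian (n + 1)) (ν.prod π) := by
    exact measurePreserving_piFinSuccAbove (fun _ : Fin (n + 1) => gaussianReal 0 1) 0
  set A' : Set (ℝ × (Fin n → ℝ)) := {p | a ≤ p.1 ^ 2 + ∑ j, (p.2 j) ^ 2} with hA'
  set B' : Set (ℝ × (Fin n → ℝ)) := {p | |p.1| ≤ t} with hB'
  have hA'meas : MeasurableSet A' := measurableSet_le measurable_const (by fun_prop)
  have hB'meas : MeasurableSet B' := measurableSet_le (by fun_prop) measurable_const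
  have heA : A = e ⁻¹' A' := by
    ext x
    simp only [hA, hA', Set.mem_preimage, Set.mem_setOf_eq, he,
      MeasurableEquiv.piFinSuccAbove_apply, Fin.removeNth]
    rw [Fin.sum_univ_succAbove (fun i => (x i) ^ 2) 0]
    rfl
  have heB : B = e ⁻¹' B' := by
    ext x
    simp only [hB, hB', Set.mem_preimage, Set.mem_setOf_eq, he,
      MeasurableEquiv.piFinSuccAbove_apply]
    rfl
  have hApply : ∀ (y : Fin n → ℝ),
      (fun x : ℝ => (x, y)) ⁻¹' A' = {x : ℝ | a - ∑ j, (y j) ^ 2 ≤ x ^ 2} := by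
    intro y
    ext x
    simp only [hA', Set.mem_preimage, Set.mem_setOf_eq]
    constructor <;> intro h <;> linarith
  have hApplyB : ∀ (y : Fin n → ℝ),
      (fun x : ℝ => (x, y)) ⁻¹' B' = T := by
    intro y; ext x; simp [hB', hT]
  -- measures of A and A ∩ B via Fubini
  have hmuA : stdGaussian (n + 1) A = ∫⁻ y, ν {x : ℝ | a - ∑ j, (y j) ^ 2 ≤ x ^ 2} ∂π := by
    rw [heA, hmp.measure_preimage hA'meas.nullMeasurableSet,
      Measure.prod_apply_symm hA'meas]
    exact lintegral_congr fun y => by rw [hApply y]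
  have hmuAB : stdGaussian (n + 1) (A ∩ B)
      = ∫⁻ y, ν ({x : ℝ | a - ∑ j, (y j) ^ 2 ≤ x ^ 2} ∩ T) ∂π := by
    rw [heA, heB, ← Set.preimage_inter,
      hmp.measure_preimage (hA'meas.inter hB'meas).nullMeasurableSet,
      Measure.prod_apply_symm (hA'meas.inter hB'meas)]
    exact lintegral_congr fun y => by rw [Set.preimage_inter, hApply y, hApplyB y]
  -- key inequality
  have hkey : stdGaussian (n + 1) (A ∩ B) ≤ stdGaussian (n + 1) A * ν T := by
    rw [hmuAB, hmuA, ← lintegral_mul_const' (ν T) _ (measure_ne_top ν T)]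
    exact lintegral_mono fun y => oneDim_neg_assoc ν _ t
  -- positivity of the conditioning event
  have hA0 : stdGaussian (n + 1) A ≠ 0 := by
    have hbase : ν {x : ℝ | a ≤ x ^ 2} ≠ 0 := by
      intro h0
      have hvol : (volume : Measure ℝ) {x : ℝ | a ≤ x ^ 2} = 0 :=
        gaussianReal_absolutelyContinuous' 0 one_ne_zero h0
      have hsub : Set.Ici (Real.sqrt a) ⊆ {x : ℝ | a ≤ x ^ 2} := by
        intro x hx
        have : Real.sqrt a ^ 2 ≤ x ^ 2 :=
          pow_le_pow_left₀ (Real.sqrt_nonneg a) hx 2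
        simpa [Real.sq_sqrt ha] using this
      have := measure_mono hsub |>.trans_eq hvol
      simp [Real.volume_Ici] at this
    have hmono : ν {x : ℝ | a ≤ x ^ 2} ≤ stdGaussian (n + 1) A := by
      rw [hmuA]
      have : ν {x : ℝ | a ≤ x ^ 2} = ∫⁻ _, ν {x : ℝ | a ≤ x ^ 2} ∂π := by
        simp [lintegral_const]
      rw [this]
      refine lintegral_mono fun y => measure_mono fun x hx => ?_
      have hsq : (0 : ℝ) ≤ ∑ j, (y j) ^ 2 := Finset.sum_nonneg fun j _ => sq_nonneg _
      have : a ≤ x ^ 2 := hx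
      simp only [Set.mem_setOf_eq]
      linarith
    intro h0
    rw [h0] at hmono
    exact hbase (le_antisymm (by simpa using hmono) zero_le)
  -- conclude
  rw [ProbabilityTheory.cond_apply hAmeas]
  calc (stdGaussian (n + 1) A)⁻¹ * stdGaussian (n + 1) (A ∩ B)
      ≤ (stdGaussian (n + 1) A)⁻¹ * (stdGaussian (n + 1) A * ν T) :=
        mul_le_mul_right hkey _
    _ = ν T := by
        rw [← mul_assoc, ENNReal.inv_mul_cancel hA0 (measure_ne_top _ _), one_mul]
end

section
/- Let D be a J-dimensional standard normal random vector N(0_J, I_J) and let a ≥ 0. Then for every convex set C ⊆ ℝ^J symmetric about the origin, P(D ∈ C | DᵀD ≥ a) ≤ P(D ∈ C); that is, D is more peaked than D conditioned on the event {DᵀD ≥ a}. -/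
open MeasureTheory ProbabilityTheory
open scoped ProbabilityTheory

open Set Metric Real
open scoped ENNReal

namespace StdGaussianPeaked

lemma lintegral_pi_prod : ∀ (n : ℕ) (μ : Fin n → Measure ℝ), (∀ i, SigmaFinite (μ i)) →
    ∀ (f : Fin n → ℝ → ℝ≥0∞), (∀ i, Measurable (f i)) →
    ∫⁻ x : Fin n → ℝ, ∏ i, f i (x i) ∂Measure.pi μ = ∏ i, ∫⁻ t, f i t ∂(μ i) := by
  intro n
  induction n with
  | zero =>
    intro μ _ f _
    simp [lintegral_one, Measure.pi_univ]
  | succ n ih =>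
    intro μ hσ f hf
    haveI := hσ
    have h0 := (MeasureTheory.measurePreserving_piFinSuccAbove μ 0)
    set g : ℝ × (Fin n → ℝ) → ℝ≥0∞ :=
      fun y => f 0 y.1 * ∏ j, f (Fin.succ j) (y.2 j) with hg
    have hmprod : Measurable fun b : Fin n → ℝ => ∏ j, f (Fin.succ j) (b j) :=
      Finset.measurable_prod _ fun j _ => (hf _).comp (measurable_pi_apply j)
    have hgm : Measurable g :=
      ((hf 0).comp measurable_fst).mul (hmprod.comp measurable_snd)
    have hcomp : ∀ x : Fin (n+1) → ℝ,
        g (MeasurableEquiv.piFinSuccAbove (fun _ => ℝ) 0 x) = ∏ i, f i (x i) := by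
      intro x
      rw [Fin.prod_univ_succ]
      simp [g, MeasurableEquiv.piFinSuccAbove, Fin.succAbove, Fin.tail]
    calc ∫⁻ x : Fin (n+1) → ℝ, ∏ i, f i (x i) ∂Measure.pi μ
        = ∫⁻ x, g (MeasurableEquiv.piFinSuccAbove (fun _ => ℝ) 0 x) ∂Measure.pi μ := by
          simp_rw [hcomp]
      _ = ∫⁻ y, g y ∂((μ 0).prod (Measure.pi fun j => μ ((0:Fin (n+1)).succAbove j))) :=
          h0.lintegral_comp hgm
      _ = ∏ i, ∫⁻ t, f i t ∂(μ i) := by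
          rw [lintegral_prod _ hgm.aemeasurable]
          simp only [g]
          rw [Fin.prod_univ_succ]
          have key : ∀ a : ℝ, ∫⁻ b : Fin n → ℝ, f 0 a * ∏ j, f (Fin.succ j) (b j)
              ∂(Measure.pi fun j => μ ((0:Fin (n+1)).succAbove j))
              = f 0 a * ∏ j, ∫⁻ t, f (Fin.succ j) t ∂(μ (Fin.succ j)) := by
            intro a
            rw [lintegral_const_mul _ hmprod]
            congr 1
            have := ih (fun j => μ ((0:Fin (n+1)).succAbove j)) (fun j => inferInstance)
              (fun j => f (Fin.succ j)) (fun j => hf _)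
            simpa [Fin.succAbove] using this
          simp_rw [key]
          rw [lintegral_mul_const _ (hf 0)]

lemma prod_gaussianPDF {J : ℕ} (x : Fin J → ℝ) :
    ∏ i, gaussianPDF 0 1 (x i)
      = ENNReal.ofReal ((Real.sqrt (2*Real.pi))⁻¹ ^ J * Real.exp (-(∑ i, (x i)^2) / 2)) := by
  have h1 : ∀ i, gaussianPDF 0 1 (x i)
      = ENNReal.ofReal ((Real.sqrt (2*Real.pi))⁻¹ * Real.exp (-((x i)^2) / 2)) := by
    intro i
    simp [gaussianPDF, gaussianPDFReal]
  simp_rw [h1]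
  rw [← ENNReal.ofReal_prod_of_nonneg]
  · congr 1
    rw [Finset.prod_mul_distrib, Finset.prod_const, ← Real.exp_sum]
    congr 2
    · simp
    · rw [← Finset.sum_div, ← Finset.sum_neg_distrib]
  · intro i _
    positivity

lemma stdGaussian_eq (J : ℕ) :
    stdGaussian J = (volume : Measure (Fin J → ℝ)).withDensity
      (fun x => ∏ i, gaussianPDF 0 1 (x i)) := by
  rw [_root_.stdGaussian]
  apply Measure.pi_eq
  intro s hs
  rw [withDensity_apply _ (MeasurableSet.univ_pi hs),
    ← lintegral_indicator (MeasurableSet.univ_pi hs) _]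
  have hind : ∀ x : Fin J → ℝ, (univ.pi s).indicator (fun x => ∏ i, gaussianPDF 0 1 (x i)) x
      = ∏ i, (s i).indicator (gaussianPDF 0 1) (x i) := by
    intro x
    by_cases hx : x ∈ univ.pi s
    · rw [indicator_of_mem hx]
      exact Finset.prod_congr rfl fun i _ =>
        (indicator_of_mem (hx i (Set.mem_univ i)) _).symm
    · rw [indicator_of_notMem hx]
      obtain ⟨i, hi⟩ : ∃ i, x i ∉ s i := by
        by_contra hcon
        push_neg at hcon
        exact hx fun i _ => hcon i
      exact (Finset.prod_eq_zero (Finset.mem_univ i) (by simp [indicator_of_notMem hi])).symm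
  simp_rw [hind]
  rw [MeasureTheory.volume_pi,
    lintegral_pi_prod J _ (fun i => inferInstance) _
      (fun i => (measurable_gaussianPDF 0 1).indicator (hs i))]
  exact Finset.prod_congr rfl fun i _ => by
    rw [lintegral_indicator (hs i) _, ← gaussianReal_apply 0 one_ne_zero (s i)]

lemma tail_ineq {X : Type*} [MeasurableSpace X] (m : Measure X) {K T : Set X}
    (hT : MeasurableSet T) (h : (K ∩ T).Nonempty → Tᶜ ⊆ K) :
    m (K ∩ T) * m univ ≤ m K * m T := by
  rcases Set.eq_empty_or_nonempty (K ∩ T) with he | hne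
  · simp [he]
  · have hTc : Tᶜ ⊆ K := h hne
    have h1 : m (K ∩ T) + m (K \ T) = m K := measure_inter_add_diff K hT
    have h2 : m T + m Tᶜ = m univ := measure_add_measure_compl hT
    calc m (K ∩ T) * m univ = m (K ∩ T) * m T + m (K ∩ T) * m Tᶜ := by rw [← h2, mul_add]
      _ ≤ m (K ∩ T) * m T + m Tᶜ * m T := by
          refine add_le_add_right ?_ _
          rw [mul_comm (m Tᶜ)]
          exact mul_le_mul_left (measure_mono Set.inter_subset_right) _
      _ = (m (K ∩ T) + m Tᶜ) * m T := by rw [add_mul]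
      _ = (m (K ∩ T) + m (K \ T)) * m T := by
          rw [Set.diff_eq, Set.inter_eq_right.mpr hTc]
      _ = m K * m T := by rw [h1]

lemma radial_key {E : Type*} [NormedAddCommGroup E] [NormedSpace ℝ E] [MeasurableSpace E]
    [BorelSpace E] [FiniteDimensional ℝ E] [Nontrivial E]
    (μ : Measure E) [μ.IsAddHaarMeasure] (φ : ℝ → ℝ≥0∞) (hφ : Measurable φ)
    (A : Set E) (hA : MeasurableSet A)
    (hstar : ∀ x ∈ A, ∀ t : ℝ, 0 < t → t ≤ 1 → t • x ∈ A) (b : ℝ) :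
    (μ.withDensity fun x => φ ‖x‖) (A ∩ {x | b ≤ ‖x‖}) * (μ.withDensity fun x => φ ‖x‖) univ
      ≤ (μ.withDensity fun x => φ ‖x‖) A * (μ.withDensity fun x => φ ‖x‖) {x | b ≤ ‖x‖} := by
  set ν := μ.withDensity fun x => φ ‖x‖ with hν
  set ρ := Measure.volumeIoiPow (Module.finrank ℝ E - 1) with hρ
  set σm := μ.toSphere with hσm
  set S : Set E := {x | b ≤ ‖x‖} with hSdef
  have hSm : MeasurableSet S := measurable_norm measurableSet_Ici
  have hnorm : ∀ (θ : sphere (0:E) 1) (r : Ioi (0:ℝ)), ‖(r:ℝ) • (θ:E)‖ = (r:ℝ) := by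
    intro θ r
    rw [norm_smul, norm_eq_of_mem_sphere, mul_one, Real.norm_eq_abs,
      abs_of_pos (mem_Ioi.mp r.2)]
  set G : Set E → (sphere (0:E) 1 × Ioi (0:ℝ)) → ℝ≥0∞ :=
    fun B p => B.indicator (fun y => φ ‖y‖) ((p.2 : ℝ) • (p.1 : E)) with hG
  have hGm : ∀ (B : Set E), MeasurableSet B → Measurable (G B) := by
    intro B hB
    exact ((hφ.comp measurable_norm).indicator hB).comp
      ((measurable_subtype_coe.comp measurable_snd).smul
        (measurable_subtype_coe.comp measurable_fst))
  have rep : ∀ (B : Set E), MeasurableSet B →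
      ν B = ∫⁻ θ : sphere (0:E) 1, ∫⁻ r : Ioi (0:ℝ), G B (θ, r) ∂ρ ∂σm := by
    intro B hB
    have hFm : Measurable (B.indicator fun y => φ ‖y‖) :=
      (hφ.comp measurable_norm).indicator hB
    have hmp := μ.measurePreserving_homeomorphUnitSphereProd
    calc ν B = ∫⁻ x, B.indicator (fun y => φ ‖y‖) x ∂μ := by
          rw [hν, withDensity_apply _ hB, lintegral_indicator hB]
      _ = ∫⁻ x in {(0:E)}ᶜ, B.indicator (fun y => φ ‖y‖) x ∂μ := by
          rw [MeasureTheory.restrict_compl_singleton]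
      _ = ∫⁻ x : ({(0:E)}ᶜ : Set E), B.indicator (fun y => φ ‖y‖) ↑x ∂(μ.comap Subtype.val) :=
          (lintegral_subtype_comap (measurableSet_singleton (0:E)).compl _).symm
      _ = ∫⁻ p : sphere (0:E) 1 × Ioi (0:ℝ), G B p ∂(σm.prod ρ) := by
          rw [← hmp.lintegral_comp (hGm B hB)]
          refine lintegral_congr fun x => ?_
          simp only [hG]
          congr 1
          have hx0 : (x : E) ≠ 0 := x.2
          simp [homeomorphUnitSphereProd, smul_smul,
            mul_inv_cancel₀ (norm_ne_zero_iff.mpr hx0)]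
      _ = ∫⁻ θ : sphere (0:E) 1, ∫⁻ r : Ioi (0:ℝ), G B (θ, r) ∂ρ ∂σm :=
          lintegral_prod _ (hGm B hB).aemeasurable
  set m : Measure (Ioi (0:ℝ)) := ρ.withDensity (fun r => φ (r:ℝ)) with hm
  set K : Set E → (sphere (0:E) 1) → Set (Ioi (0:ℝ)) :=
    fun B θ => {r : Ioi (0:ℝ) | (r:ℝ) • (θ:E) ∈ B} with hK
  have hKmeas : ∀ (B : Set E), MeasurableSet B → ∀ θ, MeasurableSet (K B θ) := by
    intro B hB θ
    exact (measurable_subtype_coe.smul_const ((θ:E))) hB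
  have conv : ∀ (B : Set E), MeasurableSet B → ∀ θ,
      ∫⁻ r : Ioi (0:ℝ), G B (θ, r) ∂ρ = m (K B θ) := by
    intro B hB θ
    have : ∀ r : Ioi (0:ℝ), G B (θ, r) = (K B θ).indicator (fun r : Ioi (0:ℝ) => φ (r:ℝ)) r := by
      intro r
      by_cases hr : (r:ℝ) • (θ:E) ∈ B
      · rw [hG]
        simp only
        rw [indicator_of_mem hr, indicator_of_mem (by exact hr), hnorm]
      · rw [hG]
        simp only
        rw [indicator_of_notMem hr, indicator_of_notMem (by exact hr)]
    rw [lintegral_congr this, lintegral_indicator (hKmeas B hB θ),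
      hm, withDensity_apply _ (hKmeas B hB θ)]
  set T : Set (Ioi (0:ℝ)) := Subtype.val ⁻¹' (Ici b) with hTdef
  have hT : MeasurableSet T := measurable_subtype_coe measurableSet_Ici
  have hKS : ∀ θ, K S θ = T := by
    intro θ
    ext r
    simp only [hK, hSdef, Set.mem_setOf_eq, hTdef, Set.mem_preimage, Set.mem_Ici, hnorm]
  have hKuniv : ∀ θ, K univ θ = univ := by intro θ; ext r; simp [hK]
  have hKinter : ∀ θ, K (A ∩ S) θ = K A θ ∩ T := by
    intro θ
    ext r
    simp only [hK, hSdef, Set.mem_setOf_eq, Set.mem_inter_iff, hTdef, Set.mem_preimage,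
      Set.mem_Ici, hnorm]
  have point : ∀ θ : sphere (0:E) 1,
      m (K (A ∩ S) θ) * m univ ≤ m (K A θ) * m T := by
    intro θ
    rw [hKinter]
    refine tail_ineq m hT ?_
    rintro ⟨r₀, hr₀A, hr₀T⟩ r hr
    have hr₀pos : (0:ℝ) < r₀ := mem_Ioi.mp r₀.2
    have hrpos : (0:ℝ) < r := mem_Ioi.mp r.2
    have hrb : (r:ℝ) < b := by
      by_contra hcon
      exact hr (by simpa [hTdef] using le_of_not_gt hcon)
    have hrr₀ : (r:ℝ) ≤ r₀ := le_trans hrb.le (by simpa [hTdef] using hr₀T)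
    have hmem := hstar _ hr₀A ((r:ℝ)/r₀) (div_pos hrpos hr₀pos)
      ((div_le_one hr₀pos).mpr hrr₀)
    have heq : ((r:ℝ)/r₀) • ((r₀:ℝ) • (θ:E)) = (r:ℝ) • (θ:E) := by
      rw [smul_smul, div_mul_cancel₀ _ (ne_of_gt hr₀pos)]
    rw [heq] at hmem
    exact hmem
  have hinner : ∀ (B : Set E), MeasurableSet B →
      Measurable fun θ : sphere (0:E) 1 => ∫⁻ r : Ioi (0:ℝ), G B (θ, r) ∂ρ := by
    intro B hB
    exact (hGm B hB).lintegral_prod_right'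
  have hAS : MeasurableSet (A ∩ S) := hA.inter hSm
  have hνuniv : ν univ = m univ * σm univ := by
    rw [rep univ MeasurableSet.univ]
    have : ∀ θ : sphere (0:E) 1, ∫⁻ r : Ioi (0:ℝ), G univ (θ, r) ∂ρ = m univ := by
      intro θ; rw [conv univ MeasurableSet.univ θ, hKuniv]
    simp_rw [this]
    rw [lintegral_const]
  have hνS : ν S = m T * σm univ := by
    rw [rep S hSm]
    have : ∀ θ : sphere (0:E) 1, ∫⁻ r : Ioi (0:ℝ), G S (θ, r) ∂ρ = m T := by
      intro θ; rw [conv S hSm θ, hKS]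
    simp_rw [this]
    rw [lintegral_const]
  calc ν (A ∩ S) * ν univ
      = (∫⁻ θ, ∫⁻ r : Ioi (0:ℝ), G (A ∩ S) (θ, r) ∂ρ ∂σm) * (m univ * σm univ) := by
        rw [rep _ hAS, hνuniv]
    _ = ((∫⁻ θ, (∫⁻ r : Ioi (0:ℝ), G (A ∩ S) (θ, r) ∂ρ) * m univ ∂σm)) * σm univ := by
        rw [lintegral_mul_const _ (hinner _ hAS), mul_assoc]
    _ ≤ ((∫⁻ θ, (∫⁻ r : Ioi (0:ℝ), G A (θ, r) ∂ρ) * m T ∂σm)) * σm univ := by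
        refine mul_le_mul_left (lintegral_mono fun θ => ?_) _
        rw [conv _ hAS θ, conv A hA θ]
        exact point θ
    _ = (∫⁻ θ, ∫⁻ r : Ioi (0:ℝ), G A (θ, r) ∂ρ ∂σm) * (m T * σm univ) := by
        rw [lintegral_mul_const _ (hinner A hA), mul_assoc]
    _ = ν A * ν S := by rw [← rep A hA, hνS]

/-- The radial density of the standard Gaussian. -/
noncomputable def gphi (J : ℕ) (r : ℝ) : ℝ≥0∞ :=
  ENNReal.ofReal ((Real.sqrt (2*Real.pi))⁻¹ ^ J * Real.exp (-(r^2) / 2))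

lemma gphi_measurable (J : ℕ) : Measurable (gphi J) := by
  apply Measurable.ennreal_ofReal
  fun_prop

lemma stdGaussian_eq_map (J : ℕ) :
    stdGaussian J = Measure.map ((MeasurableEquiv.toLp 2 (Fin J → ℝ)).symm)
      ((volume : Measure (EuclideanSpace ℝ (Fin J))).withDensity (fun x => gphi J ‖x‖)) := by
  rw [stdGaussian_eq]
  refine Measure.ext fun B hB => ?_
  set e := (MeasurableEquiv.toLp 2 (Fin J → ℝ)).symm with he
  rw [Measure.map_apply e.measurable hB, withDensity_apply _ (e.measurable hB),
    withDensity_apply _ hB]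
  have hpe : ∀ x : EuclideanSpace ℝ (Fin J),
      gphi J ‖x‖ = ∏ i, gaussianPDF 0 1 (e x i) := by
    intro x
    rw [prod_gaussianPDF]
    have hsum : ∑ i, (e x i)^2 = ‖x‖^2 := by
      rw [EuclideanSpace.norm_eq,
        Real.sq_sqrt (Finset.sum_nonneg fun i _ => sq_nonneg _)]
      exact Finset.sum_congr rfl fun i _ => by rw [Real.norm_eq_abs, sq_abs]; rfl
    rw [hsum, gphi]
  symm
  calc ∫⁻ x in e ⁻¹' B, gphi J ‖x‖ ∂volume
      = ∫⁻ x in e ⁻¹' B, (fun y => ∏ i, gaussianPDF 0 1 (y i)) (e x) ∂volume := by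
        refine setLIntegral_congr_fun (e.measurable hB) (
          fun x _ => hpe x)
    _ = ∫⁻ y in B, ∏ i, gaussianPDF 0 1 (y i) ∂volume := by
        have h := (EuclideanSpace.volume_preserving_symm_measurableEquiv_toLp
            (Fin J)).setLIntegral_comp_preimage_emb
          (MeasurableEquiv.measurableEmbedding ((MeasurableEquiv.toLp 2 (Fin J → ℝ)).symm))
          (fun y => ∏ i, gaussianPDF 0 1 (y i)) B
        rw [← he] at h
        exact h

end StdGaussianPeaked

open StdGaussianPeaked

/-- A `J`-dimensional standard normal vector `D` is more peaked than `D` conditioned on the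
event `{DᵀD ≥ a}`: for every convex set `C ⊆ ℝ^J` symmetric about the origin,
`P(D ∈ C | DᵀD ≥ a) ≤ P(D ∈ C)`. -/
theorem stdNormal_morePeaked_than_conditional_ge
    (J : ℕ) (a : ℝ) (ha : 0 ≤ a)
    (C : Set (Fin J → ℝ)) (hconv : Convex ℝ C) (hsymm : ∀ x ∈ C, -x ∈ C) :
    (stdGaussian J)[|{x | a ≤ ∑ i, (x i) ^ 2}] C ≤ stdGaussian J C := by
  have hsmeas : MeasurableSet {x : Fin J → ℝ | a ≤ ∑ i, (x i) ^ 2} :=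
    measurableSet_le measurable_const
      (Finset.measurable_sum _ fun i _ => (measurable_pi_apply i).pow_const 2)
  haveI : IsProbabilityMeasure (stdGaussian J) := by rw [_root_.stdGaussian]; infer_instance
  rcases eq_or_lt_of_le ha with ha0 | hapos
  · have huniv : {x : Fin J → ℝ | a ≤ ∑ i, (x i) ^ 2} = Set.univ := by
      ext x
      simp only [Set.mem_setOf_eq, Set.mem_univ, iff_true]
      rw [← ha0]
      exact Finset.sum_nonneg fun i _ => sq_nonneg _
    rw [huniv, cond_univ]
  · rw [cond_apply hsmeas]
    by_cases hzero : stdGaussian J {x | a ≤ ∑ i, (x i) ^ 2} = 0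
    · rw [measure_mono_null Set.inter_subset_left hzero, mul_zero]
      exact zero_le
    · have hJ : J ≠ 0 := by
        rintro rfl
        apply hzero
        have : {x : Fin 0 → ℝ | a ≤ ∑ i, (x i) ^ 2} = ∅ := by
          ext x
          simp only [Finset.univ_eq_empty, Finset.sum_empty, Set.mem_setOf_eq,
            Set.mem_empty_iff_false, iff_false, not_le]
          exact hapos
        rw [this, measure_empty]
      set s := {x : Fin J → ℝ | a ≤ ∑ i, (x i) ^ 2} with hsdef
      suffices h : stdGaussian J (s ∩ C) ≤ stdGaussian J C * stdGaussian J s by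
        have hne : stdGaussian J s ≠ ⊤ := measure_ne_top _ _
        calc (stdGaussian J s)⁻¹ * stdGaussian J (s ∩ C)
            ≤ (stdGaussian J s)⁻¹ * (stdGaussian J C * stdGaussian J s) := mul_le_mul_right h _
          _ = stdGaussian J C * ((stdGaussian J s)⁻¹ * stdGaussian J s) := by ring
          _ = stdGaussian J C := by rw [ENNReal.inv_mul_cancel hzero hne, mul_one]
      set C' := closure C with hC'def
      have hC'meas : MeasurableSet C' := isClosed_closure.measurableSet
      have hCC' : stdGaussian J C' = stdGaussian J C := by
        have hfr : stdGaussian J (frontier C) = 0 := by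
          rw [stdGaussian_eq]
          exact withDensity_absolutelyContinuous _ _ (hconv.addHaar_frontier volume)
        refine le_antisymm ?_ (measure_mono subset_closure)
        calc stdGaussian J C' ≤ stdGaussian J (C ∪ frontier C) := by
              refine measure_mono fun x hx => ?_
              by_cases hxi : x ∈ interior C
              · exact Or.inl (interior_subset hxi)
              · exact Or.inr ⟨hx, hxi⟩
          _ ≤ stdGaussian J C + stdGaussian J (frontier C) := measure_union_le _ _
          _ = stdGaussian J C := by rw [hfr, add_zero]
      have hsub : stdGaussian J (s ∩ C) ≤ stdGaussian J (s ∩ C') :=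
        measure_mono (Set.inter_subset_inter_right _ subset_closure)
      rw [← hCC']
      refine le_trans hsub ?_
      -- properties of the closure
      have hnegC : -C = C := by
        ext y
        rw [Set.mem_neg]
        exact ⟨fun h => by simpa using hsymm _ h, fun h => hsymm _ h⟩
      have hsymm' : ∀ x ∈ C', -x ∈ C' := by
        intro x hx
        have h1 : -x ∈ (fun y : Fin J → ℝ => -y) '' closure C := ⟨x, hx, rfl⟩
        have h2 := image_closure_subset_closure_image
          (f := fun y : Fin J → ℝ => -y) continuous_neg h1
        refine closure_mono ?_ h2
        rintro y ⟨z, hz, rfl⟩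
        exact hsymm z hz
      have hstar' : ∀ x ∈ C', ∀ t : ℝ, 0 < t → t ≤ 1 → t • x ∈ C' := by
        intro x hx t ht0 ht1
        have hmem := hconv.closure hx (hsymm' x hx)
          (a := (1+t)/2) (b := (1-t)/2) (by linarith) (by linarith) (by ring)
        have heq : ((1+t)/2) • x + ((1-t)/2) • (-x) = t • x := by
          rw [smul_neg, ← sub_eq_add_neg, ← sub_smul]
          congr 1
          ring
        rwa [heq] at hmem
      -- transfer to Euclidean space
      haveI : Nonempty (Fin J) := ⟨⟨0, Nat.pos_of_ne_zero hJ⟩⟩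
      set e := (MeasurableEquiv.toLp 2 (Fin J → ℝ)).symm with he
      set ν := (volume : Measure (EuclideanSpace ℝ (Fin J))).withDensity
        (fun x => gphi J ‖x‖) with hν
      have hνuniv : ν Set.univ = 1 := by
        have h1 : stdGaussian J Set.univ = 1 := measure_univ
        rwa [stdGaussian_eq_map J, Measure.map_apply e.measurable MeasurableSet.univ,
          Set.preimage_univ] at h1
      have hes : e ⁻¹' s = {x : EuclideanSpace ℝ (Fin J) | Real.sqrt a ≤ ‖x‖} := by
        ext x
        have hsum : ∑ i, (e x i)^2 = ‖x‖^2 := by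
          rw [EuclideanSpace.norm_eq,
            Real.sq_sqrt (Finset.sum_nonneg fun i _ => sq_nonneg _)]
          exact Finset.sum_congr rfl fun i _ => by rw [Real.norm_eq_abs, sq_abs]; rfl
        simp only [Set.mem_preimage, hsdef, Set.mem_setOf_eq, hsum]
        constructor
        · intro h
          calc Real.sqrt a ≤ Real.sqrt (‖x‖^2) := Real.sqrt_le_sqrt h
            _ = ‖x‖ := Real.sqrt_sq (norm_nonneg x)
        · intro h
          calc a = Real.sqrt a ^ 2 := (Real.sq_sqrt ha).symm
            _ ≤ ‖x‖^2 := by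
                exact pow_le_pow_left₀ (Real.sqrt_nonneg a) h 2
      have hA : MeasurableSet (e ⁻¹' C') := e.measurable hC'meas
      have hstarA : ∀ x ∈ e ⁻¹' C', ∀ t : ℝ, 0 < t → t ≤ 1 → t • x ∈ e ⁻¹' C' := by
        intro x hx t ht0 ht1
        exact hstar' (e x) hx t ht0 ht1
      rw [stdGaussian_eq_map J,
        Measure.map_apply e.measurable (hsmeas.inter hC'meas),
        Measure.map_apply e.measurable hC'meas,
        Measure.map_apply e.measurable hsmeas,
        Set.preimage_inter, hes]
      calc ν ({x | Real.sqrt a ≤ ‖x‖} ∩ e ⁻¹' C')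
          = ν ((e ⁻¹' C') ∩ {x | Real.sqrt a ≤ ‖x‖}) * ν Set.univ := by
            rw [hνuniv, mul_one, Set.inter_comm]
        _ ≤ ν (e ⁻¹' C') * ν {x | Real.sqrt a ≤ ‖x‖} :=
            radial_key volume (gphi J) (gphi_measurable J) _ hA hstarA (Real.sqrt a)
end

section
/- Let ε ~ N(0,1) be independent of the J-dimensional standard normal vector D = (D₁, …, D_J)ᵀ ~ N(0_J, I_J), let a > 0, and let κ, ρ ∈ [0,1]. Then for every t ≥ 0, P( κ^{1/2} |ρ^{1/2} ε + (1 − ρ)^{1/2} D₁| ≤ t | DᵀD < a ) ≥ P( |ε| ≤ t ); that is, κ^{1/2}{ρ^{1/2} ε + (1 − ρ)^{1/2} ℒ}, with ℒ ~ D₁ | {DᵀD < a} independent of ε, is more peaked than a standard normal random variable. -/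
open MeasureTheory ProbabilityTheory
open scoped ProbabilityTheory
open Set Real

instance (J : ℕ) : IsProbabilityMeasure (stdGaussian J) := by
  unfold _root_.stdGaussian; infer_instance

/-- The joint law of `(ε, D)` with `ε ~ N(0,1)` independent of the standard normal vector
`D ~ N(0_J, I_J)`. -/
noncomputable def epsD (J : ℕ) : Measure (ℝ × (Fin J → ℝ)) :=
  (gaussianReal 0 1).prod (stdGaussian J)

lemma gaussPDF_mono_abs {x y : ℝ} (h : |x| ≤ |y|) :
    gaussianPDFReal 0 1 y ≤ gaussianPDFReal 0 1 x := by
  unfold gaussianPDFReal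
  simp only [sub_zero, NNReal.coe_one, mul_one]
  apply mul_le_mul_of_nonneg_left _ (by positivity)
  apply Real.exp_le_exp.mpr
  have : x ^ 2 ≤ y ^ 2 := by
    rw [← sq_abs x, ← sq_abs y]
    exact pow_le_pow_left₀ (abs_nonneg _) h 2
  nlinarith

lemma gauss_Icc_anti_nonneg {L : ℝ} (hL : 0 ≤ L) {c₁ c₂ : ℝ} (h1 : 0 ≤ c₁) (h12 : c₁ ≤ c₂) :
    gaussianReal 0 1 (Icc (c₂ - L) (c₂ + L)) ≤ gaussianReal 0 1 (Icc (c₁ - L) (c₁ + L)) := by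
  rw [gaussianReal_apply_eq_integral _ one_ne_zero, gaussianReal_apply_eq_integral _ one_ne_zero]
  apply ENNReal.ofReal_le_ofReal
  set φ := gaussianPDFReal 0 1 with hφ
  have hφint : Integrable φ := integrable_gaussianPDFReal 0 1
  have hint : ∀ a b : ℝ, a ≤ b → ∫ x in Icc a b, φ x = ∫ x in a..b, φ x := fun a b hab => by
    rw [intervalIntegral.integral_of_le hab, integral_Icc_eq_integral_Ioc]
  rw [hint _ _ (by linarith), hint _ _ (by linarith)]
  have key : ∫ x in c₁ + L..c₂ + L, φ x ≤ ∫ x in c₁ - L..c₂ - L, φ x := by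
    have heq := intervalIntegral.integral_comp_sub_right (a := c₁ + L) (b := c₂ + L) φ (2 * L)
    have he1 : c₁ + L - 2 * L = c₁ - L := by ring
    have he2 : c₂ + L - 2 * L = c₂ - L := by ring
    rw [he1, he2] at heq
    rw [← heq]
    apply intervalIntegral.integral_mono_on (by linarith) hφint.intervalIntegrable
      (hφint.comp_sub_right (2*L)).intervalIntegrable
    intro x hx
    apply gaussPDF_mono_abs
    have hx1 : c₁ + L ≤ x := hx.1
    rw [abs_le]
    constructor <;> nlinarith [le_abs_self x, neg_abs_le x]
  have h1' : ∫ x in c₁ - L..c₁ + L, φ x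
      = (∫ x in c₁ - L..c₂ - L, φ x) + ∫ x in c₂ - L..c₁ + L, φ x := by
    rw [intervalIntegral.integral_add_adjacent_intervals] <;> exact hφint.intervalIntegrable
  have h2' : ∫ x in c₂ - L..c₂ + L, φ x
      = (∫ x in c₂ - L..c₁ + L, φ x) + ∫ x in c₁ + L..c₂ + L, φ x := by
    rw [intervalIntegral.integral_add_adjacent_intervals] <;> exact hφint.intervalIntegrable
  rw [h1', h2']
  linarith

lemma gauss_neg_map : (gaussianReal 0 1).map (fun x : ℝ => -x) = gaussianReal 0 1 := by
  have h := gaussianReal_map_const_mul (μ := 0) (v := 1) (-1)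
  have h2 : (NNReal.mk ((-1:ℝ)^2) (sq_nonneg _)) * 1 = 1 := by ext; norm_num
  rw [h2] at h
  simp only [mul_zero] at h
  rw [← h]
  congr 1
  funext x
  ring

lemma gauss_Icc_symm (L c : ℝ) :
    gaussianReal 0 1 (Icc (-c - L) (-c + L)) = gaussianReal 0 1 (Icc (c - L) (c + L)) := by
  conv_rhs => rw [← gauss_neg_map]
  rw [Measure.map_apply measurable_neg measurableSet_Icc]
  congr 1
  ext x
  simp only [mem_preimage, mem_Icc]
  constructor <;> intro h <;> constructor <;> linarith [h.1, h.2]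

lemma gauss_Icc_anti {L : ℝ} (hL : 0 ≤ L) {c₁ c₂ : ℝ} (h12 : |c₁| ≤ |c₂|) :
    gaussianReal 0 1 (Icc (c₂ - L) (c₂ + L)) ≤ gaussianReal 0 1 (Icc (c₁ - L) (c₁ + L)) := by
  have habs : ∀ c : ℝ, gaussianReal 0 1 (Icc (c - L) (c + L))
      = gaussianReal 0 1 (Icc (|c| - L) (|c| + L)) := by
    intro c
    rcases abs_choice c with h | h
    · rw [h]
    · rw [h, ← gauss_Icc_symm L (-c)]; norm_num
  rw [habs c₁, habs c₂]
  exact gauss_Icc_anti_nonneg hL (abs_nonneg _) h12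

lemma gaussPDF_conv_pointwise {v w : NNReal} (hv : v ≠ 0) (hw : w ≠ 0) (u x : ℝ) :
    gaussianPDFReal 0 w x * gaussianPDFReal x v u
      = gaussianPDFReal 0 (v + w) u * gaussianPDFReal ((w : ℝ) * u / ((v : ℝ) + w)) (v * w / (v + w)) x := by
  have hv' : (0:ℝ) < v := lt_of_le_of_ne (v.coe_nonneg) (by exact_mod_cast (Ne.symm hv))
  have hw' : (0:ℝ) < w := lt_of_le_of_ne (w.coe_nonneg) (by exact_mod_cast (Ne.symm hw))
  have hvw : (0:ℝ) < (v:ℝ) + w := by linarith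
  unfold gaussianPDFReal
  have hcoe1 : ((v + w : NNReal) : ℝ) = (v:ℝ) + w := by push_cast; ring
  have hcoe2 : ((v * w / (v + w) : NNReal) : ℝ) = (v:ℝ) * w / ((v:ℝ) + w) := by push_cast; ring
  rw [hcoe1, hcoe2]
  have hconst : (√(2 * π * w))⁻¹ * (√(2 * π * v))⁻¹
      = (√(2 * π * ((v:ℝ) + w)))⁻¹ * (√(2 * π * ((v:ℝ)*w/((v:ℝ)+w))))⁻¹ := by
    rw [← mul_inv, ← mul_inv, ← Real.sqrt_mul (by positivity), ← Real.sqrt_mul (by positivity)]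
    congr 1
    congr 1
    field_simp
  have hexp : rexp (-(x - 0)^2 / (2 * w)) * rexp (-(u - x)^2 / (2 * v))
      = rexp (-(u - 0)^2 / (2 * ((v:ℝ)+w))) * rexp (-(x - (w:ℝ)*u/((v:ℝ)+w))^2 / (2 * ((v:ℝ)*w/((v:ℝ)+w)))) := by
    rw [← Real.exp_add, ← Real.exp_add]
    congr 1
    field_simp
    ring
  calc (√(2 * π * w))⁻¹ * rexp (-(x - 0)^2 / (2 * w)) * ((√(2 * π * v))⁻¹ * rexp (-(u - x)^2 / (2 * v)))
      = ((√(2 * π * w))⁻¹ * (√(2 * π * v))⁻¹) * (rexp (-(x - 0)^2 / (2 * w)) * rexp (-(u - x)^2 / (2 * v))) := by ring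
    _ = _ := by rw [hconst, hexp]; ring

lemma gaussPDFReal_swap (μ : ℝ) (v : NNReal) (x : ℝ) :
    gaussianPDFReal μ v x = gaussianPDFReal x v μ := by
  unfold gaussianPDFReal
  rw [← neg_sub x μ, neg_sq]

lemma measurable_pdf2 (v : NNReal) : Measurable (fun q : ℝ × ℝ => gaussianPDF q.1 v q.2) := by
  apply ENNReal.measurable_ofReal.comp
  unfold gaussianPDFReal
  fun_prop

set_option maxHeartbeats 1000000 in
lemma gauss_conv {v w : NNReal} (hv : v ≠ 0) (hw : w ≠ 0) :
    Measure.map (fun p : ℝ × ℝ => p.1 + p.2) ((gaussianReal 0 v).prod (gaussianReal 0 w))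
      = gaussianReal 0 (v + w) := by
  have hvw : v + w ≠ 0 := fun h => hv (by simpa using (add_eq_zero.mp h).1)
  have hvw' : v * w / (v + w) ≠ 0 := div_ne_zero (mul_ne_zero hv hw) hvw
  ext s hs
  have hadd : Measurable (fun p : ℝ × ℝ => p.1 + p.2) := by fun_prop
  rw [Measure.map_apply hadd hs, Measure.prod_apply_symm (hadd hs)]
  have hslice : ∀ y : ℝ, (gaussianReal 0 v) ((fun x => (x, y)) ⁻¹' ((fun p : ℝ × ℝ => p.1 + p.2) ⁻¹' s))
      = ∫⁻ x in s, gaussianPDF y v x := by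
    intro y
    have : ((fun x => (x, y)) ⁻¹' ((fun p : ℝ × ℝ => p.1 + p.2) ⁻¹' s)) = (· + y) ⁻¹' s := rfl
    rw [this, ← Measure.map_apply (by fun_prop) hs, gaussianReal_map_add_const y, zero_add,
      gaussianReal_apply y hv s]
  rw [lintegral_congr hslice]
  have hinner_meas : Measurable fun y => ∫⁻ x in s, gaussianPDF y v x :=
    Measurable.lintegral_prod_right (measurable_pdf2 v)
  rw [gaussianReal_of_var_ne_zero 0 hw,
    lintegral_withDensity_eq_lintegral_mul _ (measurable_gaussianPDF 0 w) hinner_meas]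
  simp only [Pi.mul_apply]
  have hpull : ∀ y : ℝ, gaussianPDF 0 w y * ∫⁻ x in s, gaussianPDF y v x
      = ∫⁻ x in s, gaussianPDF 0 w y * gaussianPDF y v x := by
    intro y
    exact (lintegral_const_mul _ (measurable_gaussianPDF y v)).symm
  rw [lintegral_congr hpull]
  rw [lintegral_lintegral_swap]
  swap
  · apply Measurable.aemeasurable
    exact (((measurable_gaussianPDF 0 w).comp measurable_fst).mul
      ((measurable_pdf2 v).comp (measurable_fst.prodMk measurable_snd)) :)
  have hkey : ∀ x : ℝ, ∫⁻ y, gaussianPDF 0 w y * gaussianPDF y v x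
      = gaussianPDF 0 (v + w) x := by
    intro x
    have hpt : ∀ y : ℝ, gaussianPDF 0 w y * gaussianPDF y v x
        = gaussianPDF 0 (v + w) x * gaussianPDF ((w : ℝ) * x / ((v : ℝ) + w)) (v * w / (v + w)) y := by
      intro y
      unfold gaussianPDF
      rw [← ENNReal.ofReal_mul (gaussianPDFReal_nonneg _ _ _),
        ← ENNReal.ofReal_mul (gaussianPDFReal_nonneg _ _ _)]
      rw [gaussPDF_conv_pointwise hv hw x y]
    rw [lintegral_congr hpt]
    rw [lintegral_const_mul _ (measurable_gaussianPDF _ _)]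
    simp only [gaussianPDF]
    rw [lintegral_gaussianPDFReal_eq_one _ hvw', mul_one]
  rw [lintegral_congr hkey]
  rw [gaussianReal_apply 0 hvw s]

lemma bounded_integrable {ν : Measure ℝ} [IsFiniteMeasure ν] {f : ℝ → ℝ}
    (hf : AEStronglyMeasurable f ν) (h0 : ∀ x, 0 ≤ f x) (h1 : ∀ x, f x ≤ 1) :
    Integrable f ν := by
  apply (integrable_const (1:ℝ)).mono' hf
  refine Filter.Eventually.of_forall fun x => ?_
  rw [Real.norm_eq_abs, abs_of_nonneg (h0 x)]
  exact h1 x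

-- ENNReal Harris for sets nested by |·|

lemma harris_real {ν : Measure ℝ} [IsProbabilityMeasure ν] {f g : ℝ → ℝ}
    (hf : Measurable f) (hg : Measurable g)
    (hf0 : ∀ x, 0 ≤ f x) (hf1 : ∀ x, f x ≤ 1)
    (hg0 : ∀ x, 0 ≤ g x) (hg1 : ∀ x, g x ≤ 1)
    (hsign : ∀ x y, 0 ≤ (f x - f y) * (g x - g y)) :
    (∫ x, f x ∂ν) * (∫ x, g x ∂ν) ≤ ∫ x, f x * g x ∂ν := by
  have hfi : Integrable f ν := bounded_integrable hf.aestronglyMeasurable hf0 hf1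
  have hgi : Integrable g ν := bounded_integrable hg.aestronglyMeasurable hg0 hg1
  have hfgi : Integrable (fun x => f x * g x) ν :=
    bounded_integrable (hf.mul hg).aestronglyMeasurable
      (fun x => mul_nonneg (hf0 x) (hg0 x))
      (fun x => mul_le_one₀ (hf1 x) (hg0 x) (hg1 x))
  set P := ν.prod ν
  have hPprob : IsProbabilityMeasure P := by infer_instance
  have hterm : ∀ (a b : ℝ → ℝ), Measurable a → Measurable b → (∀ x, 0 ≤ a x) → (∀ x, a x ≤ 1) →
      (∀ x, 0 ≤ b x) → (∀ x, b x ≤ 1) → Integrable (fun p : ℝ × ℝ => a p.1 * b p.2) P := by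
    intro a b ha hb ha0 ha1 hb0 hb1
    refine (integrable_const (1:ℝ)).mono' ?_ ?_
    · exact ((ha.comp measurable_fst).mul (hb.comp measurable_snd)).aestronglyMeasurable
    · refine Filter.Eventually.of_forall fun p => ?_
      rw [Real.norm_eq_abs, abs_of_nonneg (mul_nonneg (ha0 _) (hb0 _))]
      exact mul_le_one₀ (ha1 _) (hb0 _) (hb1 _)
  have hfg0 : ∀ x, 0 ≤ f x * g x := fun x => mul_nonneg (hf0 x) (hg0 x)
  have hfg1 : ∀ x, f x * g x ≤ 1 := fun x => mul_le_one₀ (hf1 x) (hg0 x) (hg1 x)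
  have i1 : Integrable (fun p : ℝ × ℝ => (f p.1 * g p.1) * 1) P :=
    hterm _ _ (hf.mul hg) measurable_const hfg0 hfg1 (fun _ => zero_le_one) (fun _ => le_refl 1)
  have i2 : Integrable (fun p : ℝ × ℝ => 1 * (f p.2 * g p.2)) P :=
    hterm _ _ measurable_const (hf.mul hg) (fun _ => zero_le_one) (fun _ => le_refl 1) hfg0 hfg1
  have i3 : Integrable (fun p : ℝ × ℝ => f p.1 * g p.2) P := hterm _ _ hf hg hf0 hf1 hg0 hg1
  have i4 : Integrable (fun p : ℝ × ℝ => g p.1 * f p.2) P := hterm _ _ hg hf hg0 hg1 hf0 hf1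
  have key : 0 ≤ ∫ p, (f p.1 - f p.2) * (g p.1 - g p.2) ∂P :=
    integral_nonneg fun p => hsign p.1 p.2
  have hval : ∫ p, (f p.1 - f p.2) * (g p.1 - g p.2) ∂P
      = (∫ x, f x * g x ∂ν) + (∫ x, f x * g x ∂ν)
        - ((∫ x, f x ∂ν) * (∫ x, g x ∂ν) + (∫ x, g x ∂ν) * (∫ x, f x ∂ν)) := by
    have hfe : (fun p : ℝ × ℝ => (f p.1 - f p.2) * (g p.1 - g p.2))
        = fun p => ((fun q : ℝ × ℝ => (f q.1 * g q.1) * 1) + fun q : ℝ × ℝ => 1 * (f q.2 * g q.2)) p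
            - ((fun q : ℝ × ℝ => f q.1 * g q.2) + fun q : ℝ × ℝ => g q.1 * f q.2) p := by
      funext p
      simp only [Pi.add_apply]
      ring
    rw [hfe, integral_sub (i1.add i2) (i3.add i4)]
    simp only [Pi.add_apply]
    rw [integral_add i1 i2, integral_add i3 i4,
      integral_prod_mul (fun x => f x * g x) (fun _ => (1:ℝ)),
      integral_prod_mul (fun _ => (1:ℝ)) (fun x => f x * g x),
      integral_prod_mul f g, integral_prod_mul g f]
    simp only [integral_const, measure_univ, ENNReal.toReal_one, probReal_univ, smul_eq_mul, mul_one, one_mul]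
  rw [hval] at key
  linarith [key]

lemma key1 {G : ℝ → ENNReal} (hGmeas : Measurable G) (hG1 : ∀ x, G x ≤ 1)
    (hanti : ∀ x y : ℝ, |x| ≤ |y| → G y ≤ G x)
    {E : Set ℝ} (hE : MeasurableSet E) (hEball : ∀ x y : ℝ, x ∈ E → |y| ≤ |x| → y ∈ E) :
    (∫⁻ x, G x ∂(gaussianReal 0 1)) * (gaussianReal 0 1) E
      ≤ ∫⁻ x in E, G x ∂(gaussianReal 0 1) := by
  set γ := gaussianReal 0 1 with hγ
  set g : ℝ → ℝ := fun x => (G x).toReal with hg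
  set f : ℝ → ℝ := E.indicator 1 with hf
  have hGne : ∀ x, G x ≠ ⊤ := fun x => ne_top_of_le_ne_top ENNReal.one_ne_top (hG1 x)
  have hgmeas : Measurable g := hGmeas.ennreal_toReal
  have hg0 : ∀ x, 0 ≤ g x := fun x => ENNReal.toReal_nonneg
  have hg1 : ∀ x, g x ≤ 1 := fun x => by
    rw [hg]
    simpa using ENNReal.toReal_mono ENNReal.one_ne_top (hG1 x)
  have hfmeas : Measurable f := measurable_one.indicator hE
  have hf0 : ∀ x, 0 ≤ f x := fun x => Set.indicator_nonneg (fun _ _ => zero_le_one) x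
  have hf1 : ∀ x, f x ≤ 1 := fun x => Set.indicator_le_self' (fun _ _ => zero_le_one) x |>.trans
    (by by_cases hx : x ∈ E <;> simp [hf, Set.indicator, hx])
  have hsign : ∀ x y, 0 ≤ (f x - f y) * (g x - g y) := by
    intro x y
    by_cases hx : x ∈ E <;> by_cases hy : y ∈ E
    · simp [hf, Set.indicator_of_mem, hx, hy]
    · have hxy : |y| > |x| := by
        by_contra h
        exact hy (hEball x y hx (not_lt.mp h))
      have : g y ≤ g x := ENNReal.toReal_mono (hGne x) (hanti x y hxy.le)
      rw [hf]
      simp only [Set.indicator_of_mem hx, Set.indicator_of_notMem hy, Pi.one_apply]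
      nlinarith
    · have hxy : |x| > |y| := by
        by_contra h
        exact hx (hEball y x hy (not_lt.mp h))
      have : g x ≤ g y := ENNReal.toReal_mono (hGne y) (hanti y x hxy.le)
      rw [hf]
      simp only [Set.indicator_of_mem hy, Set.indicator_of_notMem hx, Pi.one_apply]
      nlinarith
    · simp [hf, Set.indicator_of_notMem, hx, hy]
  have hkey := harris_real (ν := gaussianReal 0 1) hfmeas hgmeas hf0 hf1 hg0 hg1 hsign
  have hintf : ∫ x, f x ∂γ = (γ E).toReal := by
    rw [hf, integral_indicator_one hE]; rfl
  have hintfg : ∫ x, f x * g x ∂γ = ∫ x in E, g x ∂γ := by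
    rw [← integral_indicator hE]
    congr 1
    funext x
    by_cases hx : x ∈ E <;> simp [hf, Set.indicator, hx]
  rw [hintf, hintfg] at hkey
  have hgi : Integrable g γ := bounded_integrable hgmeas.aestronglyMeasurable hg0 hg1
  have hlG : ∫⁻ x, G x ∂γ = ENNReal.ofReal (∫ x, g x ∂γ) := by
    rw [ofReal_integral_eq_lintegral_ofReal hgi (Filter.Eventually.of_forall hg0)]
    apply lintegral_congr
    intro x
    rw [hg]
    simp [ENNReal.ofReal_toReal (hGne x)]
  have hlGE : ∫⁻ x in E, G x ∂γ = ENNReal.ofReal (∫ x in E, g x ∂γ) := by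
    rw [ofReal_integral_eq_lintegral_ofReal (hgi.restrict) (Filter.Eventually.of_forall hg0)]
    apply lintegral_congr
    intro x
    rw [hg]
    simp [ENNReal.ofReal_toReal (hGne x)]
  rw [hlG, hlGE, ← ENNReal.ofReal_toReal (measure_ne_top γ E), ← ENNReal.ofReal_mul
    (integral_nonneg hg0)]
  exact ENNReal.ofReal_le_ofReal (by linarith [hkey])

lemma gauss_map_combo {ρ : ℝ} (hρ0 : 0 ≤ ρ) (hρ1 : ρ ≤ 1) :
    Measure.map (fun p : ℝ × ℝ => Real.sqrt ρ * p.1 + Real.sqrt (1 - ρ) * p.2)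
      ((gaussianReal 0 1).prod (gaussianReal 0 1)) = gaussianReal 0 1 := by
  set γ := gaussianReal 0 1 with hγ
  rcases eq_or_lt_of_le hρ0 with h0 | h0
  · have : (fun p : ℝ × ℝ => Real.sqrt ρ * p.1 + Real.sqrt (1 - ρ) * p.2) = Prod.snd := by
      funext p
      rw [← h0]
      simp
    rw [this]
    have : Measure.map (Prod.snd : ℝ × ℝ → ℝ) (γ.prod γ) = (γ.prod γ).snd := rfl
    rw [this, Measure.snd_prod]
  rcases eq_or_lt_of_le hρ1 with h1 | h1
  · have : (fun p : ℝ × ℝ => Real.sqrt ρ * p.1 + Real.sqrt (1 - ρ) * p.2) = Prod.fst := by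
      funext p
      rw [h1]
      simp
    rw [this]
    have : Measure.map (Prod.fst : ℝ × ℝ → ℝ) (γ.prod γ) = (γ.prod γ).fst := rfl
    rw [this, Measure.fst_prod]
  -- 0 < ρ < 1
  have h1ρ : 0 < 1 - ρ := by linarith
  have hcomp : (fun p : ℝ × ℝ => Real.sqrt ρ * p.1 + Real.sqrt (1 - ρ) * p.2)
      = (fun q : ℝ × ℝ => q.1 + q.2) ∘ (Prod.map (fun x => Real.sqrt ρ * x) (fun x => Real.sqrt (1 - ρ) * x)) := by
    funext p; rfl
  rw [hcomp, ← Measure.map_map (by fun_prop) (by fun_prop),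
    ← Measure.map_prod_map _ _ (by fun_prop) (by fun_prop)]
  have hm1 : Measure.map (fun x => Real.sqrt ρ * x) γ = gaussianReal 0 ρ.toNNReal := by
    rw [hγ, gaussianReal_map_const_mul]
    congr 1
    · ring
    · ext
      simp [Real.sq_sqrt hρ0]
      linarith
  have hm2 : Measure.map (fun x => Real.sqrt (1 - ρ) * x) γ = gaussianReal 0 (1 - ρ).toNNReal := by
    rw [hγ, gaussianReal_map_const_mul]
    congr 1
    · ring
    · ext
      simp [Real.sq_sqrt h1ρ.le]
      linarith
  rw [hm1, hm2, gauss_conv (by simp; linarith) (by simp; linarith)]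
  congr 1
  ext
  push_cast
  rw [Real.coe_toNNReal _ hρ0, Real.coe_toNNReal _ h1ρ.le]
  ring

noncomputable def Wset (ρ t : ℝ) : Set (ℝ × ℝ) :=
  {p : ℝ × ℝ | |Real.sqrt ρ * p.1 + Real.sqrt (1 - ρ) * p.2| ≤ t}

lemma Wset_meas (ρ t : ℝ) : MeasurableSet (Wset ρ t) := by
  apply measurableSet_le (by fun_prop) measurable_const

noncomputable def Gt (ρ t : ℝ) (x : ℝ) : ENNReal :=
  gaussianReal 0 1 ((fun e => (e, x)) ⁻¹' (Wset ρ t))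

lemma Gt_meas (ρ t : ℝ) : Measurable (Gt ρ t) :=
  measurable_measure_prodMk_right (Wset_meas ρ t)

lemma Gt_le_one (ρ t : ℝ) (x : ℝ) : Gt ρ t x ≤ 1 := prob_le_one

lemma Gt_lintegral {ρ : ℝ} (hρ0 : 0 ≤ ρ) (hρ1 : ρ ≤ 1) (t : ℝ) :
    ∫⁻ x, Gt ρ t x ∂(gaussianReal 0 1) = gaussianReal 0 1 {y : ℝ | |y| ≤ t} := by
  unfold Gt
  rw [← Measure.prod_apply_symm (Wset_meas ρ t)]
  have hmt : MeasurableSet {y : ℝ | |y| ≤ t} := measurableSet_le (by fun_prop) measurable_const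
  have : Wset ρ t = (fun p : ℝ × ℝ => Real.sqrt ρ * p.1 + Real.sqrt (1 - ρ) * p.2) ⁻¹' {y | |y| ≤ t} := rfl
  rw [this, ← Measure.map_apply (by fun_prop) hmt, gauss_map_combo hρ0 hρ1]

lemma Gt_anti {ρ t : ℝ} (hρ0 : 0 ≤ ρ) (hρ1 : ρ ≤ 1) (ht : 0 ≤ t) :
    ∀ x y : ℝ, |x| ≤ |y| → Gt ρ t y ≤ Gt ρ t x := by
  intro x y hxy
  rcases eq_or_lt_of_le hρ0 with h0 | h0
  · -- ρ = 0 : slice is univ or ∅ depending on |x| ≤ t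
    have hset : ∀ z : ℝ, ((fun e => (e, z)) ⁻¹' (Wset ρ t)) = {e : ℝ | |z| ≤ t} := by
      intro z
      ext e
      simp [Wset, ← h0]
    unfold Gt
    rw [hset, hset]
    by_cases hyt : |y| ≤ t
    · have hxt : |x| ≤ t := hxy.trans hyt
      simp [hyt, hxt]
    · have : {e : ℝ | |y| ≤ t} = (∅ : Set ℝ) := by ext e; simp [hyt]
      rw [this]
      simp
  · -- ρ > 0 : slice is a closed interval
    have hs : 0 < Real.sqrt ρ := Real.sqrt_pos.2 h0
    set L : ℝ := t / Real.sqrt ρ with hL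
    have hL0 : 0 ≤ L := div_nonneg ht hs.le
    have hset : ∀ z : ℝ, ((fun e => (e, z)) ⁻¹' (Wset ρ t))
        = Set.Icc ((-(Real.sqrt (1 - ρ) * z) / Real.sqrt ρ) - L)
            ((-(Real.sqrt (1 - ρ) * z) / Real.sqrt ρ) + L) := by
      intro z
      ext e
      simp only [Wset, Set.mem_preimage, Set.mem_setOf_eq, Set.mem_Icc, abs_le]
      rw [hL]
      constructor
      · rintro ⟨h1, h2⟩
        constructor
        · rw [div_sub_div_same, div_le_iff₀ hs]
          nlinarith
        · rw [← add_div, le_div_iff₀ hs]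
          nlinarith
      · rintro ⟨h1, h2⟩
        rw [div_sub_div_same, div_le_iff₀ hs] at h1
        rw [← add_div, le_div_iff₀ hs] at h2
        constructor <;> nlinarith
    unfold Gt
    rw [hset, hset]
    apply gauss_Icc_anti hL0
    rw [abs_div, abs_div, abs_neg, abs_neg, abs_mul, abs_mul]
    gcongr

/-- For `κ, ρ ∈ [0,1]` and `a > 0`, the random variable
`κ^{1/2}{ρ^{1/2} ε + (1 − ρ)^{1/2} ℒ}`, with `ℒ ~ D₁ | {DᵀD < a}` independent of `ε ~ N(0,1)`,
is more peaked than a standard normal: for `t ≥ 0`,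
`P(κ^{1/2}|ρ^{1/2} ε + (1 − ρ)^{1/2} D₁| ≤ t | DᵀD < a) ≥ P(|ε| ≤ t)`. -/
theorem scaled_convolution_truncated_lt_morePeaked_than_stdNormal
    (J : ℕ) (hJ : 0 < J) (a : ℝ) (ha : 0 < a)
    (κ ρ : ℝ) (hκ0 : 0 ≤ κ) (hκ1 : κ ≤ 1) (hρ0 : 0 ≤ ρ) (hρ1 : ρ ≤ 1)
    (t : ℝ) (ht : 0 ≤ t) :
    gaussianReal 0 1 {y : ℝ | |y| ≤ t}
      ≤ (epsD J)[|{p | ∑ i, (p.2 i) ^ 2 < a}]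
          {p | Real.sqrt κ * |Real.sqrt ρ * p.1 + Real.sqrt (1 - ρ) * p.2 ⟨0, hJ⟩| ≤ t} := by
  obtain ⟨n, rfl⟩ : ∃ n, J = n + 1 := ⟨J - 1, (Nat.succ_pred_eq_of_pos hJ).symm⟩
  set γ := gaussianReal 0 1 with hγdef
  set ν := stdGaussian (n + 1) with hνdef
  set νn := stdGaussian n with hνndef
  set c := γ {y : ℝ | |y| ≤ t} with hcdef
  set B : Set (Fin (n+1) → ℝ) := {d | ∑ i, d i ^ 2 < a} with hBdef
  have hB : MeasurableSet B := by
    apply measurableSet_lt _ measurable_const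
    exact Finset.measurable_sum _ fun i _ => (measurable_pi_apply i).pow_const 2
  set S : Set (ℝ × (Fin (n+1) → ℝ)) := {p | ∑ i, (p.2 i) ^ 2 < a} with hSdef
  have hSB : S = Prod.snd ⁻¹' B := rfl
  have hS : MeasurableSet S := by rw [hSB]; exact measurable_snd hB
  set T : Set (ℝ × (Fin (n+1) → ℝ)) :=
    {p | Real.sqrt κ * |Real.sqrt ρ * p.1 + Real.sqrt (1 - ρ) * p.2 ⟨0, hJ⟩| ≤ t} with hTdef
  have hT : MeasurableSet T := by
    apply measurableSet_le _ measurable_const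
    apply Measurable.const_mul
    apply Measurable.abs
    apply Measurable.add
    · exact measurable_fst.const_mul _
    · exact ((measurable_pi_apply _).comp measurable_snd).const_mul _
  rw [cond_apply hS]
  have hμS : epsD (n+1) S = ν B := by
    rw [epsD, hSB, ← Set.univ_prod, Measure.prod_prod, measure_univ, one_mul]
  -- positivity of ν B
  have hνBpos : ν B ≠ 0 := by
    set b : ℝ := Real.sqrt (a / (n + 1)) with hbdef
    have hb : 0 < b := Real.sqrt_pos.2 (by positivity)
    have hbox : (Set.univ.pi fun _ : Fin (n+1) => Set.Ioo (-b) b) ⊆ B := by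
      intro d hd
      simp only [Set.mem_pi, Set.mem_univ, Set.mem_Ioo, forall_true_left] at hd
      have hsq : ∀ i : Fin (n+1), d i ^ 2 < a / (n+1) := by
        intro i
        have h1 := (hd i).1
        have h2 := (hd i).2
        have : d i ^ 2 < b ^ 2 := by nlinarith
        rwa [hbdef, Real.sq_sqrt (by positivity)] at this
      have hsum : ∑ i, d i ^ 2 < ∑ _i : Fin (n+1), a / (n+1) :=
        Finset.sum_lt_sum_of_nonempty Finset.univ_nonempty fun i _ => hsq i
      rw [Finset.sum_const, Finset.card_univ, Fintype.card_fin, nsmul_eq_mul] at hsum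
      have : ((n:ℝ) + 1) * (a / (n+1)) = a := by field_simp
      rw [hBdef, Set.mem_setOf_eq]
      calc ∑ i, d i ^ 2 < (↑(n+1) : ℝ) * (a / (n+1)) := hsum
        _ = a := by push_cast; rw [this]
    have hband : 0 < γ (Set.Ioo (-b) b) := by
      rw [hγdef, gaussianReal_apply_eq_integral _ one_ne_zero]
      apply ENNReal.ofReal_pos.2
      have : ∫ x in Set.Ioo (-b) b, gaussianPDFReal 0 1 x
          = ∫ x in (-b)..b, gaussianPDFReal 0 1 x := by
        rw [intervalIntegral.integral_of_le (by linarith), integral_Ioc_eq_integral_Ioo]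
      rw [this]
      apply intervalIntegral.intervalIntegral_pos_of_pos_on
        (integrable_gaussianPDFReal 0 1).intervalIntegrable
        (fun x _ => gaussianPDFReal_pos 0 1 x one_ne_zero) (by linarith)
    have hboxpos : 0 < ν (Set.univ.pi fun _ : Fin (n+1) => Set.Ioo (-b) b) := by
      rw [hνdef, _root_.stdGaussian, Measure.pi_pi]
      simp only [Finset.prod_const, Finset.card_univ, Fintype.card_fin]
      exact ENNReal.pow_pos hband _
    exact fun h0 => (lt_irrefl (0:ENNReal))
      (lt_of_lt_of_le hboxpos ((measure_mono hbox).trans (le_of_eq h0)))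
  have hνBfin : ν B ≠ ⊤ := measure_ne_top _ _
  rw [hμS]
  -- main estimate
  have hmain : c * ν B ≤ epsD (n+1) (S ∩ T) := by
    have hμST : epsD (n+1) (S ∩ T) = ∫⁻ d, γ ((fun e => (e, d)) ⁻¹' (S ∩ T)) ∂ν := by
      rw [epsD, Measure.prod_apply_symm (hS.inter hT)]
    set H : (Fin (n+1) → ℝ) → ENNReal := B.indicator (fun d => Gt ρ t (d ⟨0, hJ⟩)) with hHdef
    have hHle : ∀ d, H d ≤ γ ((fun e => (e, d)) ⁻¹' (S ∩ T)) := by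
      intro d
      by_cases hd : d ∈ B
      · rw [hHdef, Set.indicator_of_mem hd]
        apply measure_mono
        intro e he
        have h1 : |Real.sqrt ρ * e + Real.sqrt (1-ρ) * d ⟨0,hJ⟩| ≤ t := he
        refine ⟨hd, ?_⟩
        have h2 : Real.sqrt κ ≤ 1 := Real.sqrt_le_one.2 hκ1
        have : Real.sqrt κ * |Real.sqrt ρ * e + Real.sqrt (1-ρ) * d ⟨0,hJ⟩|
            ≤ |Real.sqrt ρ * e + Real.sqrt (1-ρ) * d ⟨0,hJ⟩| := by
          nlinarith [abs_nonneg (Real.sqrt ρ * e + Real.sqrt (1-ρ) * d ⟨0,hJ⟩), Real.sqrt_nonneg κ]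
        exact this.trans h1
      · rw [hHdef, Set.indicator_of_notMem hd]
        exact zero_le
    have hstep1 : ∫⁻ d, H d ∂ν ≤ epsD (n+1) (S ∩ T) := by
      rw [hμST]
      exact lintegral_mono hHle
    -- transport through the measurable equivalence
    set eqv := MeasurableEquiv.piFinSuccAbove (fun _ : Fin (n+1) => ℝ) 0 with heqvdef
    have mp : MeasurePreserving (⇑eqv) (Measure.pi fun _ : Fin (n+1) => γ)
        (γ.prod (Measure.pi fun _ : Fin n => γ)) :=
      measurePreserving_piFinSuccAbove (fun _ : Fin (n+1) => γ) 0
    have hνn : νn = Measure.pi fun _ : Fin n => γ := rfl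
    have hν : ν = Measure.pi fun _ : Fin (n+1) => γ := rfl
    have hHmeas : Measurable H :=
      ((Gt_meas ρ t).comp (measurable_pi_apply _)).indicator hB
    have htrans : ∫⁻ q, H (eqv.symm q) ∂(γ.prod νn) = ∫⁻ d, H d ∂ν := by
      rw [hνn, hν]
      exact (mp.symm eqv).lintegral_comp hHmeas
    set EE : (Fin n → ℝ) → Set ℝ := fun r => {x | x ^ 2 + ∑ j, r j ^ 2 < a} with hEEdef
    have hEEmeas : ∀ r, MeasurableSet (EE r) := by
      intro r
      exact measurableSet_lt ((measurable_id.pow_const 2).add_const _) measurable_const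
    have hins : ∀ (x : ℝ) (r : Fin n → ℝ), eqv.symm (x, r) = Fin.insertNth (α := fun _ : Fin (n+1) => ℝ) 0 x r := fun x r => rfl
    have h0idx : ∀ (x : ℝ) (r : Fin n → ℝ), (Fin.insertNth (α := fun _ : Fin (n+1) => ℝ) 0 x r) ⟨0, hJ⟩ = x := by
      intro x r
      rw [Fin.mk_zero]
      exact Fin.insertNth_apply_same (α := fun _ : Fin (n+1) => ℝ) 0 x r
    have hsum : ∀ (x : ℝ) (r : Fin n → ℝ),
        ∑ i, (Fin.insertNth (α := fun _ : Fin (n+1) => ℝ) 0 x r) i ^ 2 = x ^ 2 + ∑ j, r j ^ 2 := by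
      intro x r
      simp [Fin.sum_univ_succ]
    have hKpt : ∀ q : ℝ × (Fin n → ℝ), H (eqv.symm q) = (EE q.2).indicator (Gt ρ t) q.1 := by
      rintro ⟨x, r⟩
      rw [hins]
      by_cases hmem : x ^ 2 + ∑ j, r j ^ 2 < a
      · have hmemB : Fin.insertNth (α := fun _ : Fin (n+1) => ℝ) 0 x r ∈ B := by
          rw [hBdef, Set.mem_setOf_eq, hsum]
          exact hmem
        have hmemE : (x, r).1 ∈ EE (x, r).2 := hmem
        rw [hHdef, Set.indicator_of_mem hmemB, Set.indicator_of_mem hmemE, h0idx]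
      · have hmemB : Fin.insertNth (α := fun _ : Fin (n+1) => ℝ) 0 x r ∉ B := by
          rw [hBdef, Set.mem_setOf_eq, hsum]
          exact hmem
        have hmemE : (x, r).1 ∉ EE (x, r).2 := hmem
        rw [hHdef, Set.indicator_of_notMem hmemB, Set.indicator_of_notMem hmemE]
    have hQmeas : MeasurableSet {q : ℝ × (Fin n → ℝ) | q.1 ^ 2 + ∑ j, q.2 j ^ 2 < a} := by
      apply measurableSet_lt _ measurable_const
      exact (measurable_fst.pow_const 2).add
        (Finset.measurable_sum _ fun j _ => ((measurable_pi_apply j).comp measurable_snd).pow_const 2)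
    have hKmeas : Measurable (fun q : ℝ × (Fin n → ℝ) => (EE q.2).indicator (Gt ρ t) q.1) := by
      have hfe : (fun q : ℝ × (Fin n → ℝ) => (EE q.2).indicator (Gt ρ t) q.1)
          = ({q : ℝ × (Fin n → ℝ) | q.1 ^ 2 + ∑ j, q.2 j ^ 2 < a}).indicator
              (fun q => Gt ρ t q.1) := by
        funext q
        by_cases h : q.1 ∈ EE q.2
        · rw [Set.indicator_of_mem h,
            Set.indicator_of_mem (show q ∈ {q : ℝ × (Fin n → ℝ) | q.1 ^ 2 + ∑ j, q.2 j ^ 2 < a} from h)]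
        · rw [Set.indicator_of_notMem h,
            Set.indicator_of_notMem (show q ∉ {q : ℝ × (Fin n → ℝ) | q.1 ^ 2 + ∑ j, q.2 j ^ 2 < a} from h)]
      rw [hfe]
      exact ((Gt_meas ρ t).comp measurable_fst).indicator hQmeas
    have hprod : ∫⁻ q, H (eqv.symm q) ∂(γ.prod νn)
        = ∫⁻ r, ∫⁻ x in EE r, Gt ρ t x ∂γ ∂νn := by
      rw [lintegral_congr hKpt, lintegral_prod_symm _ hKmeas.aemeasurable]
      apply lintegral_congr
      intro r
      exact lintegral_indicator (hEEmeas r) (Gt ρ t)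
    -- transport of ν B
    have hmeasEE : Measurable fun r => γ (EE r) := by
      have : (fun r => γ (EE r)) = fun r => γ ((fun x => (x, r)) ⁻¹'
          {q : ℝ × (Fin n → ℝ) | q.1 ^ 2 + ∑ j, q.2 j ^ 2 < a}) := rfl
      rw [this]
      exact measurable_measure_prodMk_right hQmeas
    have hνB : ν B = ∫⁻ r, γ (EE r) ∂νn := by
      have h1 : ν B = ∫⁻ d, B.indicator (fun _ => (1:ENNReal)) d ∂ν := by
        rw [lintegral_indicator_const hB, one_mul]
      have h2 : ∫⁻ d, B.indicator (fun _ => (1:ENNReal)) d ∂ν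
          = ∫⁻ q, B.indicator (fun _ => (1:ENNReal)) (eqv.symm q) ∂(γ.prod νn) := by
        rw [hνn, hν]
        exact ((mp.symm eqv).lintegral_comp (measurable_const.indicator hB)).symm
      have hpt : ∀ q : ℝ × (Fin n → ℝ), B.indicator (fun _ => (1:ENNReal)) (eqv.symm q)
          = (EE q.2).indicator (fun _ => (1:ENNReal)) q.1 := by
        rintro ⟨x, r⟩
        rw [hins]
        by_cases hmem : x ^ 2 + ∑ j, r j ^ 2 < a
        · have hmemB : Fin.insertNth (α := fun _ : Fin (n+1) => ℝ) 0 x r ∈ B := by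
            rw [hBdef, Set.mem_setOf_eq, hsum]; exact hmem
          have hmemE : (x, r).1 ∈ EE (x, r).2 := hmem
          rw [Set.indicator_of_mem hmemB, Set.indicator_of_mem hmemE]
        · have hmemB : Fin.insertNth (α := fun _ : Fin (n+1) => ℝ) 0 x r ∉ B := by
            rw [hBdef, Set.mem_setOf_eq, hsum]; exact hmem
          have hmemE : (x, r).1 ∉ EE (x, r).2 := hmem
          rw [Set.indicator_of_notMem hmemB, Set.indicator_of_notMem hmemE]
      have hKmeas' : Measurable (fun q : ℝ × (Fin n → ℝ) =>
          (EE q.2).indicator (fun _ => (1:ENNReal)) q.1) := by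
        have hfe : (fun q : ℝ × (Fin n → ℝ) => (EE q.2).indicator (fun _ => (1:ENNReal)) q.1)
            = ({q : ℝ × (Fin n → ℝ) | q.1 ^ 2 + ∑ j, q.2 j ^ 2 < a}).indicator
                (fun _ => (1:ENNReal)) := by
          funext q
          by_cases h : q.1 ∈ EE q.2
          · rw [Set.indicator_of_mem h,
              Set.indicator_of_mem (show q ∈ {q : ℝ × (Fin n → ℝ) | q.1 ^ 2 + ∑ j, q.2 j ^ 2 < a} from h)]
          · rw [Set.indicator_of_notMem h,
              Set.indicator_of_notMem (show q ∉ {q : ℝ × (Fin n → ℝ) | q.1 ^ 2 + ∑ j, q.2 j ^ 2 < a} from h)]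
        rw [hfe]
        exact measurable_const.indicator hQmeas
      rw [h1, h2, lintegral_congr hpt, lintegral_prod_symm _ hKmeas'.aemeasurable]
      apply lintegral_congr
      intro r
      rw [lintegral_indicator_const (hEEmeas r), one_mul]
    have hball : ∀ r : Fin n → ℝ, ∀ x y : ℝ, x ∈ EE r → |y| ≤ |x| → y ∈ EE r := by
      intro r x y hx hyx
      have : y ^ 2 ≤ x ^ 2 := by
        rw [← sq_abs x, ← sq_abs y]
        exact pow_le_pow_left₀ (abs_nonneg _) hyx 2
      rw [hEEdef, Set.mem_setOf_eq] at hx ⊢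
      linarith
    calc c * ν B = ∫⁻ r, c * γ (EE r) ∂νn := by
          rw [hνB, lintegral_const_mul c hmeasEE]
      _ ≤ ∫⁻ r, ∫⁻ x in EE r, Gt ρ t x ∂γ ∂νn := by
          apply lintegral_mono
          intro r
          rw [hcdef, hγdef, ← Gt_lintegral hρ0 hρ1 t]
          exact key1 (Gt_meas ρ t) (Gt_le_one ρ t) (Gt_anti hρ0 hρ1 ht) (hEEmeas r) (hball r)
      _ = ∫⁻ q, H (eqv.symm q) ∂(γ.prod νn) := hprod.symm
      _ = ∫⁻ d, H d ∂ν := htrans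
      _ ≤ epsD (n+1) (S ∩ T) := hstep1
  calc c = (ν B)⁻¹ * (c * ν B) := by
        rw [mul_comm c, ← mul_assoc, ENNReal.inv_mul_cancel hνBpos hνBfin, one_mul]
    _ ≤ (ν B)⁻¹ * epsD (n+1) (S ∩ T) := mul_le_mul_right hmain _
end

section
/- Conditional weak convergence: let (A_N, B_N, C_N) be a sequence of random elements of ℝ^p × ℝ^q × ℝ^r converging in distribution to (A, B, C), and let φ : ℝ^q × ℝ^r → {0,1} be a measurable function whose set of discontinuity points has measure zero under the law of (B, C). Fix t ∈ {0,1} with P(φ(B, C) = t) > 0. Then P(φ(B_N, C_N) = t) → P(φ(B, C) = t) > 0, and the conditional law of (A_N, B_N) given the event {φ(B_N, C_N) = t} converges weakly to the conditional law of (A, B) given {φ(B, C) = t}. -/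
open MeasureTheory ProbabilityTheory Filter Topology
open scoped ProbabilityTheory BoundedContinuousFunction

/-- Weak convergence of a sequence of measures: convergence of integrals of all bounded
continuous real-valued functions. -/
def WeakTendsto {E : Type*} [MeasurableSpace E] [TopologicalSpace E]
    (μs : ℕ → Measure E) (μ : Measure E) : Prop :=
  ∀ f : E →ᵇ ℝ, Tendsto (fun n => ∫ x, f x ∂(μs n)) atTop (𝓝 (∫ x, f x ∂μ))

lemma aux_setIntegral_le_norm {Ω : Type*} [MeasurableSpace Ω] [TopologicalSpace Ω]
    [OpensMeasurableSpace Ω] (κ : Measure Ω) [IsProbabilityMeasure κ]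
    (h : Ω →ᵇ ℝ) (S : Set Ω) : ∫ x in S, h x ∂κ ≤ ‖h‖ := by
  calc ∫ x in S, h x ∂κ ≤ ∫ x in S, ‖h‖ ∂κ := by
        apply setIntegral_mono (h.integrable κ).integrableOn (integrable_const _).integrableOn
        intro x
        exact (le_abs_self _).trans (le_of_eq (Real.norm_eq_abs _).symm) |>.trans
          (h.norm_coe_le_norm x)
    _ = (κ S).toReal • ‖h‖ := by rw [setIntegral_const]; rfl
    _ ≤ 1 * ‖h‖ := by
        rw [smul_eq_mul]
        apply mul_le_mul_of_nonneg_right _ (norm_nonneg _)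
        simpa using ENNReal.toReal_mono ENNReal.one_ne_top prob_le_one
    _ = ‖h‖ := one_mul _

lemma aux_liminf_open {Ω : Type*} [MeasurableSpace Ω] [TopologicalSpace Ω]
    [OpensMeasurableSpace Ω]
    {ν : Measure Ω} {νs : ℕ → Measure Ω} [IsProbabilityMeasure ν]
    [∀ n, IsProbabilityMeasure (νs n)]
    (h_opens : ∀ G, IsOpen G → ν G ≤ atTop.liminf fun n => νs n G)
    {U : Set Ω} (hU : IsOpen U) {h : Ω →ᵇ ℝ} (h_nn : 0 ≤ h) :
    ∫ x in U, h x ∂ν ≤ atTop.liminf fun n => ∫ x in U, h x ∂(νs n) := by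
  have h_nn' : ∀ x, 0 ≤ h x := fun x => h_nn x
  have key := lintegral_le_liminf_lintegral_of_forall_isOpen_measure_le_liminf_measure
    (μ := ν.restrict U) (μs := fun n => (νs n).restrict U) h.continuous h_nn' ?_
  swap
  · intro G hG
    rw [Measure.restrict_apply hG.measurableSet]
    simp_rw [Measure.restrict_apply hG.measurableSet]
    exact h_opens _ (hG.inter hU)
  have bound : ∀ (κ : Measure Ω) [IsProbabilityMeasure κ],
      ∫⁻ x in U, ENNReal.ofReal (h x) ∂κ ≤ ENNReal.ofReal ‖h‖ := by
    intro κ _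
    calc ∫⁻ x in U, ENNReal.ofReal (h x) ∂κ ≤ ∫⁻ _ in U, ENNReal.ofReal ‖h‖ ∂κ := by
          apply lintegral_mono
          intro x
          exact ENNReal.ofReal_le_ofReal <| (le_abs_self _).trans
            ((le_of_eq (Real.norm_eq_abs _).symm).trans (h.norm_coe_le_norm x))
      _ = ENNReal.ofReal ‖h‖ * κ U := by rw [setLIntegral_const]
      _ ≤ ENNReal.ofReal ‖h‖ * 1 := mul_le_mul_right prob_le_one _
      _ = ENNReal.ofReal ‖h‖ := mul_one _
  have eqr : ∀ (κ : Measure Ω) [IsProbabilityMeasure κ],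
      ∫ x in U, h x ∂κ = (∫⁻ x in U, ENNReal.ofReal (h x) ∂κ).toReal := by
    intro κ _
    rw [integral_eq_lintegral_of_nonneg_ae (Eventually.of_forall h_nn')
      h.continuous.measurable.aestronglyMeasurable]
  have liminf_le : (atTop.liminf fun n => ∫⁻ x in U, ENNReal.ofReal (h x) ∂νs n)
      ≤ ENNReal.ofReal ‖h‖ := by
    apply liminf_le_of_le ⟨0, by simp⟩
    intro y hy
    obtain ⟨i, hi⟩ := hy.exists
    exact hi.trans (bound _)
  have toReal_eq := ENNReal.liminf_toReal_eq (f := atTop) ENNReal.ofReal_ne_top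
    (Eventually.of_forall fun n => bound (νs n))
  rw [eqr ν]
  have goal_rw : (atTop.liminf fun n => ∫ x in U, h x ∂νs n)
      = (atTop.liminf fun n => ∫⁻ x in U, ENNReal.ofReal (h x) ∂νs n).toReal := by
    rw [← toReal_eq]
    exact liminf_congr (Eventually.of_forall fun n => eqr (νs n))
  rw [goal_rw]
  exact ENNReal.toReal_mono (liminf_le.trans_lt ENNReal.ofReal_lt_top).ne key

lemma aux_setIntegral_tendsto_nonneg {Ω : Type*} [MeasurableSpace Ω] [TopologicalSpace Ω]
    [OpensMeasurableSpace Ω]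
    {ν : Measure Ω} {νs : ℕ → Measure Ω} [IsProbabilityMeasure ν]
    [∀ n, IsProbabilityMeasure (νs n)]
    (h_opens : ∀ G, IsOpen G → ν G ≤ atTop.liminf fun n => νs n G)
    {E : Set Ω} (hE : MeasurableSet E) (hbd : ν (frontier E) = 0)
    {h : Ω →ᵇ ℝ} (h_nn : 0 ≤ h)
    (hconv : Tendsto (fun n => ∫ x, h x ∂νs n) atTop (𝓝 (∫ x, h x ∂ν))) :
    Tendsto (fun n => ∫ x in E, h x ∂νs n) atTop (𝓝 (∫ x in E, h x ∂ν)) := by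
  have h_nn' : ∀ x, 0 ≤ h x := fun x => h_nn x
  -- interior / a.e. equality facts
  have hae : ∀ (S : Set Ω), ν (frontier S) = 0 → ν.restrict (interior S) = ν.restrict S := by
    intro S hS
    apply Measure.restrict_congr_set
    rw [Filter.eventuallyEq_set]
    have : ν (S \ interior S) = 0 := by
      apply measure_mono_null _ hS
      intro x hx
      exact ⟨subset_closure hx.1, hx.2⟩
    filter_upwards [measure_eq_zero_iff_ae_notMem.mp this] with x hx
    constructor
    · exact fun h' => interior_subset h'
    · intro hxS
      by_contra hni
      exact hx ⟨hxS, hni⟩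
  -- bounds
  have ub : ∀ (n : ℕ) (S : Set Ω), ∫ x in S, h x ∂νs n ≤ ‖h‖ :=
    fun n S => aux_setIntegral_le_norm (νs n) h S
  have lb : ∀ (n : ℕ) (S : Set Ω), 0 ≤ ∫ x in S, h x ∂νs n :=
    fun n S => integral_nonneg h_nn'
  have bddAbove : ∀ S, IsBoundedUnder (· ≤ ·) atTop (fun n => ∫ x in S, h x ∂νs n) :=
    fun S => Filter.isBoundedUnder_of ⟨‖h‖, fun n => ub n S⟩
  have bddBelow : ∀ S, IsBoundedUnder (· ≥ ·) atTop (fun n => ∫ x in S, h x ∂νs n) :=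
    fun S => Filter.isBoundedUnder_of ⟨0, fun n => lb n S⟩
  -- lower bound on liminf over any measurable S with null frontier
  have lower : ∀ (S : Set Ω), ν (frontier S) = 0 →
      ∫ x in S, h x ∂ν ≤ atTop.liminf fun n => ∫ x in S, h x ∂νs n := by
    intro S hS
    have step1 : ∫ x in S, h x ∂ν = ∫ x in interior S, h x ∂ν := by rw [hae S hS]
    rw [step1]
    refine (aux_liminf_open h_opens isOpen_interior h_nn).trans ?_
    apply liminf_le_liminf
    · apply Eventually.of_forall
      intro n
      exact setIntegral_mono_set (h.integrable (νs n)).integrableOn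
        (Eventually.of_forall h_nn') (HasSubset.Subset.eventuallyLE interior_subset)
    · exact bddBelow _
    · exact (bddAbove _).isCoboundedUnder_ge
  have hfc : ν (frontier Eᶜ) = 0 := by rwa [frontier_compl]
  -- A, B, T
  set A := ∫ x in E, h x ∂ν with hA
  set B := ∫ x in Eᶜ, h x ∂ν with hB
  have hTsplit : ∀ (κ : Measure Ω) [IsProbabilityMeasure κ],
      ∫ x in E, h x ∂κ + ∫ x in Eᶜ, h x ∂κ = ∫ x, h x ∂κ :=
    fun κ _ => integral_add_compl hE (h.integrable κ)
  have lim_upper : atTop.limsup (fun n => ∫ x in E, h x ∂νs n) ≤ A := by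
    apply le_of_forall_pos_le_add
    intro ε hε
    apply limsup_le_of_le (bddBelow E).isCoboundedUnder_le
    have hT : ∀ᶠ n in atTop, ∫ x, h x ∂νs n < ∫ x, h x ∂ν + ε / 2 := by
      have := hconv.eventually (eventually_lt_nhds (lt_add_of_pos_right _ (by linarith : (0:ℝ) < ε/2)))
      exact this
    have hBn : ∀ᶠ n in atTop, B - ε / 2 < ∫ x in Eᶜ, h x ∂νs n := by
      apply eventually_lt_of_lt_liminf
      · exact lt_of_lt_of_le (by linarith) (lower Eᶜ hfc)
      · exact bddBelow Eᶜ
    filter_upwards [hT, hBn] with n h1 h2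
    have h3 := hTsplit (νs n)
    have h4 := hTsplit ν
    rw [← hA, ← hB] at h4
    linarith
  have lim_lower : A ≤ atTop.liminf fun n => ∫ x in E, h x ∂νs n := lower E hbd
  exact tendsto_of_le_liminf_of_limsup_le lim_lower lim_upper (bddAbove E) (bddBelow E)

lemma aux_setIntegral_tendsto {Ω : Type*} [MeasurableSpace Ω] [TopologicalSpace Ω]
    [OpensMeasurableSpace Ω]
    {ν : Measure Ω} {νs : ℕ → Measure Ω} [IsProbabilityMeasure ν]
    [∀ n, IsProbabilityMeasure (νs n)]
    (h_opens : ∀ G, IsOpen G → ν G ≤ atTop.liminf fun n => νs n G)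
    {E : Set Ω} (hE : MeasurableSet E) (hbd : ν (frontier E) = 0)
    (hmeas : Tendsto (fun n => νs n E) atTop (𝓝 (ν E)))
    (h : Ω →ᵇ ℝ)
    (hconv : ∀ f : Ω →ᵇ ℝ, Tendsto (fun n => ∫ x, f x ∂νs n) atTop (𝓝 (∫ x, f x ∂ν))) :
    Tendsto (fun n => ∫ x in E, h x ∂νs n) atTop (𝓝 (∫ x in E, h x ∂ν)) := by
  set h' : Ω →ᵇ ℝ := h + BoundedContinuousFunction.const Ω ‖h‖ with hh'
  have h'_nn : 0 ≤ h' := by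
    intro x
    have hx : |h x| ≤ ‖h‖ := by
      rw [← Real.norm_eq_abs]; exact h.norm_coe_le_norm x
    have h2 : (0:ℝ) ≤ h x + ‖h‖ := by
      have := neg_le_of_abs_le hx; linarith
    simpa [hh'] using h2
  have split : ∀ (κ : Measure Ω) [IsProbabilityMeasure κ],
      ∫ x in E, h' x ∂κ = ∫ x in E, h x ∂κ + ‖h‖ * (κ E).toReal := by
    intro κ _
    simp only [hh', BoundedContinuousFunction.add_apply, BoundedContinuousFunction.const_apply]
    rw [integral_add (h.integrable κ).integrableOn (integrable_const _).integrableOn,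
      setIntegral_const, smul_eq_mul, mul_comm]
    rfl
  have toReal_tendsto : Tendsto (fun n => (νs n E).toReal) atTop (𝓝 ((ν E).toReal)) :=
    (ENNReal.tendsto_toReal (measure_ne_top ν E)).comp hmeas
  have key := aux_setIntegral_tendsto_nonneg h_opens hE hbd h'_nn (hconv h')
  have eq1 : (fun n => ∫ x in E, h x ∂νs n)
      = fun n => ∫ x in E, h' x ∂νs n - ‖h‖ * (νs n E).toReal := by
    funext n; rw [split (νs n)]; ring
  rw [eq1, show ∫ x in E, h x ∂ν = ∫ x in E, h' x ∂ν - ‖h‖ * (ν E).toReal by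
    rw [split ν]; ring]
  exact key.sub (toReal_tendsto.const_mul _)

/-- **Conditional weak convergence.** If `(A_N, B_N, C_N) ⇝ (A, B, C)` in
`ℝ^p × (ℝ^q × ℝ^r)` (laws `μs N` and `μ`), `φ : ℝ^q × ℝ^r → {0,1}` is measurable with
discontinuity set null under the law of `(B, C)`, and `P(φ(B,C) = t) > 0` for a fixed
`t ∈ {0,1}`, then `P(φ(B_N,C_N) = t) → P(φ(B,C) = t)` and the conditional law of
`(A_N, B_N)` given `{φ(B_N,C_N) = t}` converges weakly to the conditional law of `(A, B)`
given `{φ(B,C) = t}`. -/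
theorem conditional_weak_convergence (p q r : ℕ)
    (μs : ℕ → Measure ((Fin p → ℝ) × ((Fin q → ℝ) × (Fin r → ℝ))))
    (μ : Measure ((Fin p → ℝ) × ((Fin q → ℝ) × (Fin r → ℝ))))
    [∀ n, IsProbabilityMeasure (μs n)] [IsProbabilityMeasure μ]
    (hconv : WeakTendsto μs μ)
    (φ : (Fin q → ℝ) × (Fin r → ℝ) → ℝ) (hφmeas : Measurable φ)
    (hφ01 : ∀ x, φ x = 0 ∨ φ x = 1)
    (hdisc : μ.map Prod.snd {x | ¬ ContinuousAt φ x} = 0)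
    (t : ℝ) (ht : t = 0 ∨ t = 1)
    (hpos : 0 < μ {ω | φ ω.2 = t}) :
    Tendsto (fun n => (μs n) {ω | φ ω.2 = t}) atTop (𝓝 (μ {ω | φ ω.2 = t})) ∧
      WeakTendsto
        (fun n => ((μs n)[|{ω | φ ω.2 = t}]).map (fun ω => (ω.1, ω.2.1)))
        ((μ[|{ω | φ ω.2 = t}]).map (fun ω => (ω.1, ω.2.1))) := by
  set Ω := (Fin p → ℝ) × ((Fin q → ℝ) × (Fin r → ℝ))
  set E : Set Ω := {ω | φ ω.2 = t} with hEdef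
  have hEmeas : MeasurableSet E := (hφmeas.comp measurable_snd) (measurableSet_singleton t)
  -- null frontier
  have hDmeas : MeasurableSet {x | ¬ ContinuousAt φ x} := by
    have : IsGδ {x | ContinuousAt φ x} := IsGδ.setOf_continuousAt φ
    simpa [Set.compl_setOf] using this.measurableSet.compl
  have hD0 : μ (Prod.snd ⁻¹' {x | ¬ ContinuousAt φ x}) = 0 := by
    rw [← Measure.map_apply measurable_snd hDmeas]; exact hdisc
  have hfront : frontier E ⊆ Prod.snd ⁻¹' {x | ¬ ContinuousAt φ x} := by
    intro ω hω
    by_contra hc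
    simp only [Set.mem_preimage, Set.mem_setOf_eq, not_not] at hc
    have hc2 : Tendsto (fun ω' : Ω => φ ω'.2) (𝓝 ω) (𝓝 (φ ω.2)) :=
      (hc.comp (Continuous.continuousAt continuous_snd)).tendsto
    have hev : ∀ᶠ ω' in 𝓝 ω, dist (φ ω'.2) (φ ω.2) < 1/2 :=
      hc2 (Metric.ball_mem_nhds _ (by norm_num))
    have heq : ∀ᶠ ω' in 𝓝 ω, φ ω'.2 = φ ω.2 := by
      filter_upwards [hev] with ω' hd
      rcases hφ01 ω'.2 with h1 | h1 <;> rcases hφ01 ω.2 with h2 | h2 <;>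
        rw [h1, h2] at hd ⊢ <;> rw [Real.dist_eq] at hd <;> norm_num at hd
    by_cases hcase : φ ω.2 = t
    · have hmem : E ∈ 𝓝 ω := by
        filter_upwards [heq] with ω' he
        simp only [hEdef, Set.mem_setOf_eq, he, hcase]
      rw [frontier, Set.mem_diff] at hω
      exact hω.2 (mem_interior_iff_mem_nhds.2 hmem)
    · have hmem : Eᶜ ∈ 𝓝 ω := by
        filter_upwards [heq] with ω' he
        simp only [hEdef, Set.mem_compl_iff, Set.mem_setOf_eq, he]
        exact hcase
      rw [← frontier_compl, frontier, Set.mem_diff] at hω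
      exact hω.2 (mem_interior_iff_mem_nhds.2 hmem)
  have hfront0 : μ (frontier E) = 0 := measure_mono_null hfront hD0
  -- probability measure convergence
  have hPM := (ProbabilityMeasure.tendsto_iff_forall_integral_tendsto
      (μs := fun n => (⟨μs n, inferInstance⟩ :
        ProbabilityMeasure ((Fin p → ℝ) × ((Fin q → ℝ) × (Fin r → ℝ)))))
      (μ := ⟨μ, inferInstance⟩)).2 (fun f => hconv f)
  have h_opens : ∀ G, IsOpen G → μ G ≤ atTop.liminf fun n => μs n G := fun G hG =>
    ProbabilityMeasure.le_liminf_measure_open_of_tendsto hPM hG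
  have part1 : Tendsto (fun n => (μs n) E) atTop (𝓝 (μ E)) :=
    tendsto_measure_of_null_frontier h_opens hfront0
  refine ⟨part1, ?_⟩
  -- part 2
  intro f
  have g_cont : Continuous (fun ω : Ω => (ω.1, ω.2.1)) := by fun_prop
  have g_meas : Measurable (fun ω : Ω => (ω.1, ω.2.1)) := g_cont.measurable
  set h : Ω →ᵇ ℝ := f.compContinuous ⟨fun ω : Ω => (ω.1, ω.2.1), g_cont⟩ with hhdef
  have key : ∀ (κ : Measure Ω) [IsProbabilityMeasure κ],
      ∫ x, f x ∂((κ[|E]).map (fun ω : Ω => (ω.1, ω.2.1)))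
        = ((κ E).toReal)⁻¹ * ∫ x in E, h x ∂κ := by
    intro κ _
    rw [integral_map g_meas.aemeasurable f.continuous.measurable.aestronglyMeasurable]
    show ∫ ω, h ω ∂(κ[|E]) = _
    rw [ProbabilityTheory.cond, integral_smul_measure, ENNReal.toReal_inv, smul_eq_mul]
  simp only [key]
  have hμE0 : (μ E).toReal ≠ 0 := by
    have : μ E ≠ 0 := hpos.ne'
    simp [ENNReal.toReal_eq_zero_iff, this, measure_ne_top]
  have toReal_tendsto : Tendsto (fun n => ((μs n) E).toReal) atTop (𝓝 ((μ E).toReal)) :=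
    (ENNReal.tendsto_toReal (measure_ne_top μ E)).comp part1
  have hlim := (toReal_tendsto.inv₀ hμE0).mul
    (aux_setIntegral_tendsto h_opens hEmeas hfront0 part1 h hconv)
  rw [← key μ] at hlim
  exact hlim.congr (fun n => (key (μs n)).symm)
end

section
/- Under a completely randomized treatment-control experiment with centered covariates, the exact covariance matrix of the difference in covariate means is Cov(τ̂_x) = (N / (N₀ N₁)) S_x², equivalently N·Cov(τ̂_x) = (e₀ e₁)^{-1} S_x², where S_x² = (N−1)^{-1} Σ_{i=1}^N x_i x_iᵀ (assume N ≥ 2). -/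
open Finset

/-- The set of assignment vectors of a completely randomized experiment: vectors
`z ∈ {0,1}^N` with exactly `N₁` ones (treated units). -/
def crDesign (N N₁ : ℕ) : Finset (Fin N → Bool) :=
  univ.filter fun z => (univ.filter fun i => z i = true).card = N₁

/-- Expectation of a statistic over the uniform randomization distribution of `Z`. -/
noncomputable def crExp (N N₁ : ℕ) (f : (Fin N → Bool) → ℝ) : ℝ :=
  (∑ z ∈ crDesign N N₁, f z) / (crDesign N N₁).card

/-- The difference in means of a unit-level variable `v` between treated and control groups. -/
noncomputable def diffMeans (N N₁ N₀ : ℕ) (v : Fin N → ℝ) (z : Fin N → Bool) : ℝ :=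
  (∑ i ∈ univ.filter fun i => z i = true, v i) / N₁
    - (∑ i ∈ univ.filter fun i => z i = false, v i) / N₀

lemma card_design_subset (N k : ℕ) (t : Finset (Fin N)) (htk : t.card ≤ k) :
    ((crDesign N k).filter fun z => ∀ i ∈ t, z i = true).card
      = (N - t.card).choose (k - t.card) := by
  have h1 : ((crDesign N k).filter fun z => ∀ i ∈ t, z i = true).card
      = (tᶜ.powersetCard (k - t.card)).card := by
    apply Finset.card_nbij' (fun z => (univ.filter fun i => z i = true) \ t)
      (fun s => fun i => decide (i ∈ s ∪ t))
    · intro z hz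
      simp only [mem_coe, crDesign, mem_filter, mem_univ, true_and] at hz
      obtain ⟨hcard, ht⟩ := hz
      rw [mem_coe, mem_powersetCard]
      constructor
      · intro i hi
        simp only [mem_sdiff] at hi
        simpa using hi.2
      · rw [card_sdiff_of_subset (fun i hi => by simp [ht i hi]), hcard]
    · intro s hs
      rw [mem_coe, mem_powersetCard] at hs
      obtain ⟨hsub, hcard⟩ := hs
      have hdisj : Disjoint s t := by
        rw [disjoint_left]
        intro a ha hat
        have := hsub ha
        simp [hat] at this
      simp only [mem_coe, crDesign, mem_filter, mem_univ, true_and]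
      have hfil : (univ.filter fun i => decide (i ∈ s ∪ t) = true) = s ∪ t := by
        ext i; simp
      refine ⟨?_, fun i hi => by simp [mem_union, hi]⟩
      rw [hfil, card_union_of_disjoint hdisj, hcard]
      omega
    · intro z hz
      simp only [mem_coe, crDesign, mem_filter, mem_univ, true_and] at hz
      funext i
      by_cases h : z i = true
      · by_cases hit : i ∈ t <;> simp [hit, h, mem_union, mem_sdiff]
      · simp only [Bool.not_eq_true] at h
        have hit : i ∉ t := fun hit => by simp [hz.2 i hit] at h
        simp [h, mem_union, mem_sdiff, hit]
    · intro s hs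
      rw [mem_coe, mem_powersetCard] at hs
      have hdisj : Disjoint s t := by
        rw [disjoint_left]
        intro a ha hat
        have := hs.1 ha
        simp [hat] at this
      have hfil : (univ.filter fun i => decide (i ∈ s ∪ t) = true) = s ∪ t := by
        ext i; simp
      show (univ.filter fun i => decide (i ∈ s ∪ t) = true) \ t = s
      rw [hfil, union_sdiff_cancel_right hdisj]
  rw [h1, card_powersetCard, card_compl]
  simp

lemma card_crDesign (N k : ℕ) : (crDesign N k).card = N.choose k := by
  have := card_design_subset N k ∅ (Nat.zero_le k)
  simpa using this

lemma count_one (N k : ℕ) (hk : 1 ≤ k) (i : Fin N) :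
    ((crDesign N k).filter fun z => z i = true).card = (N - 1).choose (k - 1) := by
  have := card_design_subset N k {i} (by simpa using hk)
  simpa using this

lemma count_two (N k : ℕ) (hk : 2 ≤ k) (i i' : Fin N) (hne : i ≠ i') :
    ((crDesign N k).filter fun z => z i = true ∧ z i' = true).card
      = (N - 2).choose (k - 2) := by
  have hc : ({i, i'} : Finset (Fin N)).card = 2 := by
    rw [card_insert_of_notMem (by simpa using hne), card_singleton]
  have := card_design_subset N k {i, i'} (by omega)
  rw [hc] at this
  rw [← this]
  congr 1
  apply filter_congr
  intro z _
  simp [forall_eq_or_imp]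

lemma count_two_one (N : ℕ) (i i' : Fin N) (hne : i ≠ i') :
    ((crDesign N 1).filter fun z => z i = true ∧ z i' = true).card = 0 := by
  rw [card_eq_zero, eq_empty_iff_forall_notMem]
  intro z hz
  simp only [crDesign, mem_filter, mem_univ, true_and] at hz
  obtain ⟨hcard, hi, hi2⟩ := hz
  have h1 : i ∈ univ.filter fun a => z a = true := by simp [hi]
  have h2 : i' ∈ univ.filter fun a => z a = true := by simp [hi2]
  have := Finset.one_lt_card.2 ⟨i, h1, i', h2, hne⟩
  omega

lemma nat_id1 (N N₁ : ℕ) (h : 1 ≤ N₁) (h' : N₁ ≤ N) :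
    N * (N - 1).choose (N₁ - 1) = N₁ * N.choose N₁ := by
  obtain ⟨m, rfl⟩ : ∃ m, N = m + 1 := ⟨N - 1, by omega⟩
  obtain ⟨l, rfl⟩ : ∃ l, N₁ = l + 1 := ⟨N₁ - 1, by omega⟩
  simpa [Nat.mul_comm] using Nat.add_one_mul_choose_eq m l

lemma nat_id2 (N N₁ : ℕ) (h : 2 ≤ N₁) (h' : N₁ ≤ N) :
    (N * (N - 1)) * (N - 2).choose (N₁ - 2) = (N₁ * (N₁ - 1)) * N.choose N₁ := by
  have h1 : (N - 1) * (N - 2).choose (N₁ - 2) = (N₁ - 1) * (N - 1).choose (N₁ - 1) := by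
    have := nat_id1 (N - 1) (N₁ - 1) (by omega) (by omega)
    rw [show N - 1 - 1 = N - 2 by omega, show N₁ - 1 - 1 = N₁ - 2 by omega] at this
    exact this
  have h2 := nat_id1 N N₁ (by omega) h'
  calc (N * (N - 1)) * (N - 2).choose (N₁ - 2)
      = N * ((N - 1) * (N - 2).choose (N₁ - 2)) := by ring
    _ = (N₁ - 1) * (N * (N - 1).choose (N₁ - 1)) := by rw [h1]; ring
    _ = (N₁ * (N₁ - 1)) * N.choose N₁ := by rw [h2]; ring

lemma sum_T (N k : ℕ) (v : Fin N → ℝ) :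
    ∑ z ∈ crDesign N k, ∑ i ∈ univ.filter (fun i => z i = true), v i
      = ∑ i, (((crDesign N k).filter fun z => z i = true).card : ℝ) * v i := by
  simp only [sum_filter]
  rw [Finset.sum_comm]
  refine Finset.sum_congr rfl fun i _ => ?_
  rw [← sum_filter, sum_const, nsmul_eq_mul]

lemma sum_TT (N k : ℕ) (v w : Fin N → ℝ) :
    ∑ z ∈ crDesign N k, (∑ i ∈ univ.filter (fun i => z i = true), v i)
        * (∑ i ∈ univ.filter (fun i => z i = true), w i)
      = ∑ i, ∑ i', (((crDesign N k).filter fun z => z i = true ∧ z i' = true).card : ℝ)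
          * (v i * w i') := by
  have step : ∀ z : Fin N → Bool,
      (∑ i ∈ univ.filter (fun i => z i = true), v i)
        * (∑ i ∈ univ.filter (fun i => z i = true), w i)
      = ∑ i, ∑ i', if z i = true ∧ z i' = true then v i * w i' else 0 := by
    intro z
    rw [Finset.sum_mul_sum]
    simp only [sum_filter]
    refine Finset.sum_congr rfl fun i _ => ?_
    by_cases h : z i = true <;> simp [h]
  simp only [step]
  rw [Finset.sum_comm]
  refine Finset.sum_congr rfl fun i _ => ?_
  rw [Finset.sum_comm]
  refine Finset.sum_congr rfl fun i' _ => ?_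
  rw [← sum_filter, sum_const, nsmul_eq_mul]

lemma sum_T_zero (N k : ℕ) (hk : 1 ≤ k) (v : Fin N → ℝ) (hv : ∑ i, v i = 0) :
    ∑ z ∈ crDesign N k, ∑ i ∈ univ.filter (fun i => z i = true), v i = 0 := by
  rw [sum_T]
  have : ∀ i : Fin N, (((crDesign N k).filter fun z => z i = true).card : ℝ) * v i
      = ((N - 1).choose (k - 1) : ℝ) * v i := fun i => by rw [count_one N k hk i]
  simp only [this]
  rw [← mul_sum, hv, mul_zero]

lemma sum_TT_eval (N k : ℕ) (hk : 1 ≤ k) (c₂ : ℝ)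
    (hc₂ : ∀ i i' : Fin N, i ≠ i' →
      (((crDesign N k).filter fun z => z i = true ∧ z i' = true).card : ℝ) = c₂)
    (v w : Fin N → ℝ) (hw : ∑ i, w i = 0) :
    ∑ z ∈ crDesign N k, (∑ i ∈ univ.filter (fun i => z i = true), v i)
        * (∑ i ∈ univ.filter (fun i => z i = true), w i)
      = (((N - 1).choose (k - 1) : ℝ) - c₂) * ∑ i, v i * w i := by
  rw [sum_TT]
  have step1 : ∀ i : Fin N,
      (∑ i', (((crDesign N k).filter fun z => z i = true ∧ z i' = true).card : ℝ)
          * (v i * w i'))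
      = ((N - 1).choose (k - 1) : ℝ) * (v i * w i)
          + c₂ * (v i * (- w i)) := by
    intro i
    rw [← Finset.add_sum_erase univ _ (mem_univ i)]
    have hdiag : ((crDesign N k).filter fun z => z i = true ∧ z i = true)
        = (crDesign N k).filter fun z => z i = true := by
      apply filter_congr; intro z _; simp
    have herase : ∑ i' ∈ univ.erase i, w i' = - w i := by
      have := Finset.add_sum_erase univ w (mem_univ i)
      rw [hw] at this
      linarith
    rw [hdiag, count_one N k hk i]
    congr 1
    calc ∑ i' ∈ univ.erase i,
          (((crDesign N k).filter fun z => z i = true ∧ z i' = true).card : ℝ) * (v i * w i')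
        = ∑ i' ∈ univ.erase i, c₂ * v i * w i' := by
          refine Finset.sum_congr rfl fun i' hi' => ?_
          rw [hc₂ i i' (fun h => (mem_erase.1 hi').1 h.symm)]
          ring
      _ = c₂ * v i * ∑ i' ∈ univ.erase i, w i' := by rw [← mul_sum]
      _ = c₂ * (v i * (- w i)) := by rw [herase]; ring
  simp only [step1]
  rw [Finset.sum_add_distrib, ← mul_sum, ← mul_sum]
  have : ∑ i, v i * (- w i) = - ∑ i, v i * w i := by
    rw [← Finset.sum_neg_distrib]
    exact Finset.sum_congr rfl fun i _ => by ring
  rw [this]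
  ring

lemma diffMeans_eq (N N₁ N₀ : ℕ) (v : Fin N → ℝ) (hv : ∑ i, v i = 0) (z : Fin N → Bool) :
    diffMeans N N₁ N₀ v z
      = (1/(N₁:ℝ) + 1/(N₀:ℝ)) * ∑ i ∈ univ.filter (fun i => z i = true), v i := by
  have hsplit := Finset.sum_filter_add_sum_filter_not univ (fun i => z i = true) v
  have hfe : (univ.filter fun i => ¬ (z i = true)) = univ.filter fun i => z i = false := by
    ext i; simp
  rw [hfe, hv] at hsplit
  have hctrl : ∑ i ∈ univ.filter (fun i => z i = false), v i
      = - ∑ i ∈ univ.filter (fun i => z i = true), v i := by linarith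
  rw [diffMeans, hctrl]
  ring


/-- **Exact covariance of the difference in covariate means.** Under complete randomization
with centered covariates, entrywise, `Cov(τ̂_x) = (N / (N₀ N₁)) S_x²` where
`S_x² = (N−1)⁻¹ Σ_i x_i x_iᵀ`. -/
theorem covariance_diff_in_covariate_means
    (N N₁ N₀ J : ℕ) (hN : 2 ≤ N) (h₁ : 0 < N₁) (h₀ : 0 < N₀) (hsum : N₁ + N₀ = N)
    (x : Fin N → Fin J → ℝ) (hcent : ∀ j, ∑ i, x i j = 0) (j k : Fin J) :
    crExp N N₁ (fun z => diffMeans N N₁ N₀ (fun i => x i j) z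
          * diffMeans N N₁ N₀ (fun i => x i k) z)
      - crExp N N₁ (diffMeans N N₁ N₀ (fun i => x i j))
          * crExp N N₁ (diffMeans N N₁ N₀ (fun i => x i k))
    = (N : ℝ) / ((N₀ : ℝ) * N₁) * ((∑ i, x i j * x i k) / ((N : ℝ) - 1)) := by
  have hN₁N : N₁ ≤ N := by omega
  set vj : Fin N → ℝ := fun i => x i j with hvj
  set vk : Fin N → ℝ := fun i => x i k with hvk
  have hvj0 : ∑ i, vj i = 0 := hcent j
  have hvk0 : ∑ i, vk i = 0 := hcent k
  set q : ℝ := 1/(N₁:ℝ) + 1/(N₀:ℝ) with hq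
  set T : (Fin N → ℝ) → (Fin N → Bool) → ℝ :=
    fun v z => ∑ i ∈ univ.filter (fun i => z i = true), v i with hT
  -- first moments are zero
  have hE1 : crExp N N₁ (diffMeans N N₁ N₀ vj) = 0 := by
    rw [crExp]
    have : ∑ z ∈ crDesign N N₁, diffMeans N N₁ N₀ vj z
        = q * ∑ z ∈ crDesign N N₁, T vj z := by
      rw [mul_sum]
      exact Finset.sum_congr rfl fun z _ => diffMeans_eq N N₁ N₀ vj hvj0 z
    rw [this, sum_T_zero N N₁ h₁ vj hvj0, mul_zero, zero_div]
  have hE2 : crExp N N₁ (diffMeans N N₁ N₀ vk) = 0 := by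
    rw [crExp]
    have : ∑ z ∈ crDesign N N₁, diffMeans N N₁ N₀ vk z
        = q * ∑ z ∈ crDesign N N₁, T vk z := by
      rw [mul_sum]
      exact Finset.sum_congr rfl fun z _ => diffMeans_eq N N₁ N₀ vk hvk0 z
    rw [this, sum_T_zero N N₁ h₁ vk hvk0, mul_zero, zero_div]
  -- choose c₂
  obtain ⟨c₂, hc₂, hc₂id⟩ :
      ∃ c₂ : ℝ, (∀ i i' : Fin N, i ≠ i' →
          (((crDesign N N₁).filter fun z => z i = true ∧ z i' = true).card : ℝ) = c₂)
        ∧ (N:ℝ) * ((N:ℝ) - 1) * c₂ = (N₁:ℝ) * ((N₁:ℝ) - 1) * (N.choose N₁ : ℝ) := by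
    rcases Nat.lt_or_ge N₁ 2 with h2 | h2
    · have hN₁1 : N₁ = 1 := by omega
      refine ⟨0, fun i i' hne => ?_, by rw [hN₁1]; push_cast; ring⟩
      subst hN₁1
      rw [count_two_one N i i' hne]; norm_num
    · refine ⟨((N - 2).choose (N₁ - 2) : ℝ), fun i i' hne => by
        rw [count_two N N₁ h2 i i' hne], ?_⟩
      have := nat_id2 N N₁ h2 hN₁N
      have hcast : ((N * (N - 1)) * (N - 2).choose (N₁ - 2) : ℕ) =
          ((N₁ * (N₁ - 1)) * N.choose N₁ : ℕ) := this
      have := congrArg (fun n : ℕ => (n : ℝ)) hcast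
      push_cast [Nat.cast_sub (by omega : 1 ≤ N), Nat.cast_sub (by omega : 1 ≤ N₁)] at this
      linarith [this]
  -- second moment
  have hTT : ∑ z ∈ crDesign N N₁, diffMeans N N₁ N₀ vj z * diffMeans N N₁ N₀ vk z
      = q^2 * ((((N - 1).choose (N₁ - 1) : ℝ) - c₂) * ∑ i, vj i * vk i) := by
    have hz : ∀ z : Fin N → Bool,
        diffMeans N N₁ N₀ vj z * diffMeans N N₁ N₀ vk z
          = q^2 * (T vj z * T vk z) := by
      intro z
      rw [diffMeans_eq N N₁ N₀ vj hvj0 z, diffMeans_eq N N₁ N₀ vk hvk0 z]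
      ring
    rw [Finset.sum_congr rfl fun z _ => hz z, ← mul_sum,
      sum_TT_eval N N₁ h₁ c₂ hc₂ vj vk hvk0]
  -- assemble
  rw [hE1, hE2, mul_zero, sub_zero, crExp, hTT, card_crDesign]
  -- key real identities
  set c₁ : ℝ := ((N - 1).choose (N₁ - 1) : ℝ) with hc₁
  set D : ℝ := (N.choose N₁ : ℝ) with hD
  have hA : (N:ℝ) * c₁ = (N₁:ℝ) * D := by
    have := congrArg (fun n : ℕ => (n : ℝ)) (nat_id1 N N₁ h₁ hN₁N)
    push_cast at this
    linarith [this]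
  have hsumℝ : (N₁:ℝ) + (N₀:ℝ) = (N:ℝ) := by exact_mod_cast congrArg (fun n : ℕ => (n:ℝ)) hsum
  have hDpos : 0 < D := by
    rw [hD]; exact_mod_cast Nat.choose_pos hN₁N
  have hN₁pos : (0:ℝ) < N₁ := by exact_mod_cast h₁
  have hN₀pos : (0:ℝ) < N₀ := by exact_mod_cast h₀
  have hNpos : (0:ℝ) < N := by exact_mod_cast (by omega : 0 < N)
  have hN1 : (1:ℝ) < N := by exact_mod_cast hN
  have key : (N:ℝ) * ((N:ℝ) - 1) * (c₁ - c₂) = (N₁:ℝ) * (N₀:ℝ) * D := by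
    linear_combination ((N:ℝ) - 1) * hA - hc₂id - (N₁:ℝ) * D * hsumℝ
  have hS : ∑ i, vj i * vk i = ∑ i, x i j * x i k := rfl
  rw [hS, hq]
  have hD' : D ≠ 0 := ne_of_gt hDpos
  have h1' : (N₁:ℝ) ≠ 0 := ne_of_gt hN₁pos
  have h0' : (N₀:ℝ) ≠ 0 := ne_of_gt hN₀pos
  have hN' : (N:ℝ) ≠ 0 := ne_of_gt hNpos
  have hN1' : (N:ℝ) - 1 ≠ 0 := by linarith
  have hq2 : (1/(N₁:ℝ) + 1/(N₀:ℝ)) = (N:ℝ)/((N₁:ℝ)*(N₀:ℝ)) := by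
    field_simp
    linarith
  have hcc : c₁ - c₂ = (N₁:ℝ) * N₀ * D / ((N:ℝ) * ((N:ℝ) - 1)) := by
    rw [eq_div_iff (by exact mul_ne_zero hN' hN1')]
    linarith [key]
  rw [hq2, hcc]
  field_simp
end

section
/- For a finite population with invertible covariate covariance matrix S_x², the following exact algebraic identities hold: v_N − v_L = c_Nᵀ v_x^{-1} c_N ≥ 0 and v_F − v_L = c_Fᵀ v_x^{-1} c_F ≥ 0, where v_x = (e₀ e₁)^{-1} S_x², c_N = S_x² (e₀^{-1} γ₀ + e₁^{-1} γ₁), and c_F = S_x² (e₁^{-1} − e₀^{-1})(γ₁ − γ₀). In particular v_L ≤ v_N and v_L ≤ v_F. -/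
open Finset Matrix

noncomputable section

/-- Finite-population mean. -/
def fpMean (N : ℕ) (f : Fin N → ℝ) : ℝ := (∑ i, f i) / N

/-- Finite-population variance (divisor `N − 1`). -/
def fpVar (N : ℕ) (f : Fin N → ℝ) : ℝ := (∑ i, (f i - fpMean N f) ^ 2) / ((N : ℝ) - 1)

/-- The finite-population covariate covariance matrix `S_x² = (N−1)⁻¹ Σ_i x_i x_iᵀ`
(for centered covariates). -/
def covMat (N J : ℕ) (x : Fin N → Fin J → ℝ) : Matrix (Fin J) (Fin J) ℝ :=
  Matrix.of fun j k => (∑ i, x i j * x i k) / ((N : ℝ) - 1)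

/-- Population least-squares coefficient `γ = (S_x²)⁻¹ (N−1)⁻¹ Σ_i x_i (Y_i − Ȳ)`. -/
def gammaCoef (N J : ℕ) (x : Fin N → Fin J → ℝ) (Y : Fin N → ℝ) : Fin J → ℝ :=
  (covMat N J x)⁻¹.mulVec fun j => (∑ i, x i j * (Y i - fpMean N Y)) / ((N : ℝ) - 1)

/-- `v_* = e₀⁻¹ S²_{0,*} + e₁⁻¹ S²_{1,*} − S²_{τ,*}` for the adjusted potential outcomes
`Y_{i,*}(z) = Y_i(z) − x_iᵀ g_z`. -/
def vVal (N J : ℕ) (x : Fin N → Fin J → ℝ) (Y0 Y1 : Fin N → ℝ) (e1 : ℝ)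
    (g0 g1 : Fin J → ℝ) : ℝ :=
  (1 - e1)⁻¹ * fpVar N (fun i => Y0 i - ∑ j, x i j * g0 j)
    + e1⁻¹ * fpVar N (fun i => Y1 i - ∑ j, x i j * g1 j)
    - fpVar N (fun i => (Y1 i - ∑ j, x i j * g1 j) - (Y0 i - ∑ j, x i j * g0 j))

end

noncomputable def bvec (N J : ℕ) (x : Fin N → Fin J → ℝ) (Y : Fin N → ℝ) : Fin J → ℝ :=
  fun j => (∑ i, x i j * (Y i - fpMean N Y)) / ((N : ℝ) - 1)

lemma gamma_eq (N J : ℕ) (x : Fin N → Fin J → ℝ) (Y : Fin N → ℝ) :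
    gammaCoef N J x Y = (covMat N J x)⁻¹.mulVec (bvec N J x Y) := rfl

lemma sum_mul_swap (N J : ℕ) (x : Fin N → Fin J → ℝ) (g : Fin J → ℝ) (c : Fin N → ℝ) :
    ∑ j, g j * ∑ i, x i j * c i = ∑ i, (∑ j, x i j * g j) * c i := by
  simp only [Finset.mul_sum, Finset.sum_mul]
  rw [Finset.sum_comm]
  exact Finset.sum_congr rfl fun i _ => Finset.sum_congr rfl fun j _ => by ring

lemma dot_mulVec_covMat (N J : ℕ) (x : Fin N → Fin J → ℝ) (g h : Fin J → ℝ) :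
    g ⬝ᵥ (covMat N J x).mulVec h
      = (∑ i, (∑ j, x i j * g j) * (∑ j, x i j * h j)) / ((N:ℝ) - 1) := by
  have hrow : ∀ j, (covMat N J x).mulVec h j
      = (∑ i, x i j * (∑ k, x i k * h k)) / ((N:ℝ) - 1) := by
    intro j
    simp only [Matrix.mulVec, dotProduct, covMat, Matrix.of_apply, div_mul_eq_mul_div,
      ← Finset.sum_div]
    congr 1
    simp only [Finset.sum_mul, Finset.mul_sum]
    rw [Finset.sum_comm]
    exact Finset.sum_congr rfl fun i _ => Finset.sum_congr rfl fun k _ => by ring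
  simp only [dotProduct, hrow, mul_div_assoc', ← Finset.sum_div]
  congr 1
  rw [sum_mul_swap N J x g (fun i => ∑ k, x i k * h k)]

lemma fpMean_adj (N J : ℕ) (x : Fin N → Fin J → ℝ) (hcent : ∀ j, ∑ i, x i j = 0)
    (Y : Fin N → ℝ) (g : Fin J → ℝ) :
    fpMean N (fun i => Y i - ∑ j, x i j * g j) = fpMean N Y := by
  unfold fpMean
  congr 1
  rw [Finset.sum_sub_distrib]
  have : ∑ i, ∑ j, x i j * g j = 0 := by
    rw [Finset.sum_comm]
    simp only [← Finset.sum_mul, hcent, zero_mul, Finset.sum_const_zero]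
  rw [this, sub_zero]

lemma var_expansion (N J : ℕ) (x : Fin N → Fin J → ℝ) (hcent : ∀ j, ∑ i, x i j = 0)
    (Y : Fin N → ℝ) (g : Fin J → ℝ) :
    fpVar N (fun i => Y i - ∑ j, x i j * g j)
      = fpVar N Y - 2 * (g ⬝ᵥ bvec N J x Y) + g ⬝ᵥ (covMat N J x).mulVec g := by
  unfold fpVar
  rw [fpMean_adj N J x hcent Y g, dot_mulVec_covMat]
  have hmid : g ⬝ᵥ bvec N J x Y
      = (∑ i, (∑ j, x i j * g j) * (Y i - fpMean N Y)) / ((N:ℝ) - 1) := by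
    simp only [dotProduct, bvec, mul_div_assoc', ← Finset.sum_div]
    congr 1
    exact sum_mul_swap N J x g (fun i => Y i - fpMean N Y)
  rw [hmid, ← mul_div_assoc, div_sub_div_same, ← add_div]
  congr 1
  rw [Finset.mul_sum, ← Finset.sum_sub_distrib, ← Finset.sum_add_distrib]
  exact Finset.sum_congr rfl fun i _ => by ring

lemma fpMean_sub (N : ℕ) (Y1 Y0 : Fin N → ℝ) :
    fpMean N (fun i => Y1 i - Y0 i) = fpMean N Y1 - fpMean N Y0 := by
  unfold fpMean
  rw [Finset.sum_sub_distrib, sub_div]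

lemma bvec_sub (N J : ℕ) (x : Fin N → Fin J → ℝ) (Y1 Y0 : Fin N → ℝ) :
    bvec N J x (fun i => Y1 i - Y0 i) = bvec N J x Y1 - bvec N J x Y0 := by
  funext j
  simp only [bvec, Pi.sub_apply, fpMean_sub, ← sub_div]
  congr 1
  rw [← Finset.sum_sub_distrib]
  exact Finset.sum_congr rfl fun i _ => by ring

/-- **Exact algebraic identities** `v_N − v_L = c_Nᵀ v_x⁻¹ c_N ≥ 0` and
`v_F − v_L = c_Fᵀ v_x⁻¹ c_F ≥ 0`; in particular `v_L ≤ v_N` and `v_L ≤ v_F`. -/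
theorem v_differences_quadratic_forms
    (N J : ℕ) (x : Fin N → Fin J → ℝ) (hcent : ∀ j, ∑ i, x i j = 0)
    (Y0 Y1 : Fin N → ℝ) (e1 : ℝ) (he0 : 0 < e1) (he1 : e1 < 1)
    (hSx : IsUnit (covMat N J x).det) :
    let e0 : ℝ := 1 - e1
    let γ0 : Fin J → ℝ := gammaCoef N J x Y0
    let γ1 : Fin J → ℝ := gammaCoef N J x Y1
    let γF : Fin J → ℝ := e0 • γ0 + e1 • γ1
    let vN : ℝ := vVal N J x Y0 Y1 e1 0 0
    let vF : ℝ := vVal N J x Y0 Y1 e1 γF γF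
    let vL : ℝ := vVal N J x Y0 Y1 e1 γ0 γ1
    let vx : Matrix (Fin J) (Fin J) ℝ := (e0 * e1)⁻¹ • covMat N J x
    let cN : Fin J → ℝ := (covMat N J x).mulVec (e0⁻¹ • γ0 + e1⁻¹ • γ1)
    let cF : Fin J → ℝ := (covMat N J x).mulVec ((e1⁻¹ - e0⁻¹) • (γ1 - γ0))
    vN - vL = cN ⬝ᵥ vx⁻¹.mulVec cN ∧ 0 ≤ cN ⬝ᵥ vx⁻¹.mulVec cN ∧
      vF - vL = cF ⬝ᵥ vx⁻¹.mulVec cF ∧ 0 ≤ cF ⬝ᵥ vx⁻¹.mulVec cF ∧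
      vL ≤ vN ∧ vL ≤ vF := by
  intro e0 γ0 γ1 γF vN vF vL vx cN cF
  have he1ne : e1 ≠ 0 := ne_of_gt he0
  have he0pos : (0:ℝ) < 1 - e1 := by linarith
  have he0ne : (1:ℝ) - e1 ≠ 0 := ne_of_gt he0pos
  have hAmul : covMat N J x * (covMat N J x)⁻¹ = 1 := Matrix.mul_nonsing_inv _ hSx
  have hAmul' : (covMat N J x)⁻¹ * covMat N J x = 1 := Matrix.nonsing_inv_mul _ hSx
  have hb0 : (covMat N J x).mulVec γ0 = bvec N J x Y0 := by
    show (covMat N J x).mulVec ((covMat N J x)⁻¹.mulVec (bvec N J x Y0)) = _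
    rw [Matrix.mulVec_mulVec, hAmul, Matrix.one_mulVec]
  have hb1 : (covMat N J x).mulVec γ1 = bvec N J x Y1 := by
    show (covMat N J x).mulVec ((covMat N J x)⁻¹.mulVec (bvec N J x Y1)) = _
    rw [Matrix.mulVec_mulVec, hAmul, Matrix.one_mulVec]
  have hsymm : ∀ g h : Fin J → ℝ,
      g ⬝ᵥ (covMat N J x).mulVec h = h ⬝ᵥ (covMat N J x).mulVec g := by
    intro g h
    rw [dot_mulVec_covMat, dot_mulVec_covMat]
    congr 1
    exact Finset.sum_congr rfl fun i _ => mul_comm _ _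
  have hnonneg : ∀ g : Fin J → ℝ, 0 ≤ g ⬝ᵥ (covMat N J x).mulVec g := by
    intro g
    rcases Nat.eq_zero_or_pos J with hJ | hJ
    · haveI : IsEmpty (Fin J) := by rw [hJ]; infer_instance
      simp [dotProduct]
    · have hN : 2 ≤ N := by
        by_contra hN
        push_neg at hN
        have hA0 : covMat N J x = 0 := by
          ext j k
          simp only [covMat, Matrix.of_apply, Matrix.zero_apply]
          have : N = 0 ∨ N = 1 := by omega
          rcases this with h | h
          · haveI : IsEmpty (Fin N) := by rw [h]; infer_instance
            rw [Finset.univ_eq_empty, Finset.sum_empty, zero_div]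
          · have hden : ((N:ℝ) - 1) = 0 := by rw [h]; norm_num
            rw [hden, div_zero]
        rw [hA0] at hSx
        haveI : Nonempty (Fin J) := ⟨⟨0, hJ⟩⟩
        rw [Matrix.det_zero] at hSx
        exact not_isUnit_zero hSx
      rw [dot_mulVec_covMat]
      apply div_nonneg
      · exact Finset.sum_nonneg fun i _ => mul_self_nonneg _
      · have : (2:ℝ) ≤ N := by exact_mod_cast hN
        linarith
  have hvVal : ∀ g0 g1 : Fin J → ℝ, vVal N J x Y0 Y1 e1 g0 g1 =
      (1 - e1)⁻¹ * (fpVar N Y0 - 2 * (g0 ⬝ᵥ bvec N J x Y0)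
        + g0 ⬝ᵥ (covMat N J x).mulVec g0)
      + e1⁻¹ * (fpVar N Y1 - 2 * (g1 ⬝ᵥ bvec N J x Y1)
        + g1 ⬝ᵥ (covMat N J x).mulVec g1)
      - (fpVar N (fun i => Y1 i - Y0 i)
        - 2 * ((g1 - g0) ⬝ᵥ (bvec N J x Y1 - bvec N J x Y0))
        + (g1 - g0) ⬝ᵥ (covMat N J x).mulVec (g1 - g0)) := by
    intro g0 g1
    unfold vVal
    rw [var_expansion N J x hcent Y0 g0, var_expansion N J x hcent Y1 g1]
    have hfun : (fun i => (Y1 i - ∑ j, x i j * g1 j) - (Y0 i - ∑ j, x i j * g0 j))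
        = fun i => (Y1 i - Y0 i) - ∑ j, x i j * (g1 - g0) j := by
      funext i
      simp only [Pi.sub_apply, mul_sub, Finset.sum_sub_distrib]
      ring
    rw [hfun, var_expansion N J x hcent (fun i => Y1 i - Y0 i) (g1 - g0),
      bvec_sub N J x Y1 Y0]
  -- scalar abbreviation equations
  have hvx : vx⁻¹ = ((1 - e1) * e1) • (covMat N J x)⁻¹ := by
    have h : vx * (((1 - e1) * e1) • (covMat N J x)⁻¹) = 1 := by
      show (((1 - e1) * e1)⁻¹ • covMat N J x) * _ = 1
      rw [Matrix.smul_mul, Matrix.mul_smul, smul_smul,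
        inv_mul_cancel₀ (mul_ne_zero he0ne he1ne), hAmul, one_smul]
    exact Matrix.inv_eq_right_inv h
  have hkey : ∀ w : Fin J → ℝ,
      ((covMat N J x).mulVec w) ⬝ᵥ vx⁻¹.mulVec ((covMat N J x).mulVec w)
        = ((1 - e1) * e1) * (w ⬝ᵥ (covMat N J x).mulVec w) := by
    intro w
    rw [hvx, Matrix.smul_mulVec, Matrix.mulVec_mulVec, hAmul',
      Matrix.one_mulVec, dotProduct_smul, smul_eq_mul, dotProduct_comm]
  -- component dot products
  have hQ10 : γ1 ⬝ᵥ (covMat N J x).mulVec γ0 = γ0 ⬝ᵥ (covMat N J x).mulVec γ1 :=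
    hsymm γ1 γ0
  -- the two quadratic-form values
  have hcNval : cN ⬝ᵥ vx⁻¹.mulVec cN
      = ((1 - e1) * e1) * ((1 - e1)⁻¹ * (1 - e1)⁻¹ * (γ0 ⬝ᵥ (covMat N J x).mulVec γ0)
        + 2 * ((1 - e1)⁻¹ * e1⁻¹) * (γ0 ⬝ᵥ (covMat N J x).mulVec γ1)
        + e1⁻¹ * e1⁻¹ * (γ1 ⬝ᵥ (covMat N J x).mulVec γ1)) := by
    have hcNdef : cN = (covMat N J x).mulVec ((1 - e1)⁻¹ • γ0 + e1⁻¹ • γ1) := rfl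
    rw [hcNdef, hkey]
    congr 1
    simp only [Matrix.mulVec_add, Matrix.mulVec_smul, dotProduct_add, add_dotProduct,
      smul_dotProduct, dotProduct_smul, smul_eq_mul, hQ10]
    ring
  have hcFval : cF ⬝ᵥ vx⁻¹.mulVec cF
      = ((1 - e1) * e1) * ((e1⁻¹ - (1 - e1)⁻¹) * (e1⁻¹ - (1 - e1)⁻¹)
        * ((γ1 ⬝ᵥ (covMat N J x).mulVec γ1)
          - 2 * (γ0 ⬝ᵥ (covMat N J x).mulVec γ1)
          + (γ0 ⬝ᵥ (covMat N J x).mulVec γ0))) := by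
    have hcFdef : cF = (covMat N J x).mulVec ((e1⁻¹ - (1 - e1)⁻¹) • (γ1 - γ0)) := rfl
    rw [hcFdef, hkey]
    congr 1
    simp only [Matrix.mulVec_smul, Matrix.mulVec_sub, smul_dotProduct, dotProduct_smul,
      sub_dotProduct, dotProduct_sub, smul_eq_mul, hQ10]
    ring
  -- value of vN
  have hvN : vN = (1 - e1)⁻¹ * fpVar N Y0 + e1⁻¹ * fpVar N Y1
      - fpVar N (fun i => Y1 i - Y0 i) := by
    show vVal N J x Y0 Y1 e1 0 0 = _
    rw [hvVal 0 0]
    simp [zero_dotProduct]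
  have hvL : vL = (1 - e1)⁻¹ * (fpVar N Y0 - (γ0 ⬝ᵥ (covMat N J x).mulVec γ0))
      + e1⁻¹ * (fpVar N Y1 - (γ1 ⬝ᵥ (covMat N J x).mulVec γ1))
      - (fpVar N (fun i => Y1 i - Y0 i)
        - ((γ1 ⬝ᵥ (covMat N J x).mulVec γ1)
          - 2 * (γ0 ⬝ᵥ (covMat N J x).mulVec γ1)
          + (γ0 ⬝ᵥ (covMat N J x).mulVec γ0))) := by
    show vVal N J x Y0 Y1 e1 γ0 γ1 = _
    rw [hvVal γ0 γ1, ← hb0, ← hb1, ← Matrix.mulVec_sub]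
    simp only [Matrix.mulVec_sub, dotProduct_sub, sub_dotProduct, hQ10]
    ring
  have hvF : vF = (1 - e1)⁻¹ * (fpVar N Y0
        - 2 * (γF ⬝ᵥ (covMat N J x).mulVec γ0) + (γF ⬝ᵥ (covMat N J x).mulVec γF))
      + e1⁻¹ * (fpVar N Y1
        - 2 * (γF ⬝ᵥ (covMat N J x).mulVec γ1) + (γF ⬝ᵥ (covMat N J x).mulVec γF))
      - fpVar N (fun i => Y1 i - Y0 i) := by
    show vVal N J x Y0 Y1 e1 γF γF = _
    rw [hvVal γF γF, ← hb0, ← hb1, sub_self]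
    simp only [zero_dotProduct, dotProduct_zero]
    ring
  have hγF0 : γF ⬝ᵥ (covMat N J x).mulVec γ0
      = (1 - e1) * (γ0 ⬝ᵥ (covMat N J x).mulVec γ0)
        + e1 * (γ0 ⬝ᵥ (covMat N J x).mulVec γ1) := by
    show ((1 - e1) • γ0 + e1 • γ1) ⬝ᵥ _ = _
    simp only [add_dotProduct, smul_dotProduct, smul_eq_mul, hQ10]
  have hγF1 : γF ⬝ᵥ (covMat N J x).mulVec γ1
      = (1 - e1) * (γ0 ⬝ᵥ (covMat N J x).mulVec γ1)
        + e1 * (γ1 ⬝ᵥ (covMat N J x).mulVec γ1) := by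
    show ((1 - e1) • γ0 + e1 • γ1) ⬝ᵥ _ = _
    simp only [add_dotProduct, smul_dotProduct, smul_eq_mul]
  have hγFF : γF ⬝ᵥ (covMat N J x).mulVec γF
      = (1 - e1) * ((1 - e1) * (γ0 ⬝ᵥ (covMat N J x).mulVec γ0)
          + e1 * (γ0 ⬝ᵥ (covMat N J x).mulVec γ1))
        + e1 * ((1 - e1) * (γ0 ⬝ᵥ (covMat N J x).mulVec γ1)
          + e1 * (γ1 ⬝ᵥ (covMat N J x).mulVec γ1)) := by
    show ((1 - e1) • γ0 + e1 • γ1) ⬝ᵥ (covMat N J x).mulVec ((1 - e1) • γ0 + e1 • γ1) = _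
    simp only [Matrix.mulVec_add, Matrix.mulVec_smul, dotProduct_add, add_dotProduct,
      smul_dotProduct, dotProduct_smul, smul_eq_mul, hQ10]
  have h2 : 0 ≤ cN ⬝ᵥ vx⁻¹.mulVec cN := by
    have hcNdef : cN = (covMat N J x).mulVec ((1 - e1)⁻¹ • γ0 + e1⁻¹ • γ1) := rfl
    rw [hcNdef, hkey]
    exact mul_nonneg (le_of_lt (mul_pos he0pos he0)) (hnonneg _)
  have h4 : 0 ≤ cF ⬝ᵥ vx⁻¹.mulVec cF := by
    have hcFdef : cF = (covMat N J x).mulVec ((e1⁻¹ - (1 - e1)⁻¹) • (γ1 - γ0)) := rfl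
    rw [hcFdef, hkey]
    exact mul_nonneg (le_of_lt (mul_pos he0pos he0)) (hnonneg _)
  have h1 : vN - vL = cN ⬝ᵥ vx⁻¹.mulVec cN := by
    rw [hvN, hvL, hcNval]
    field_simp
    ring
  have h3 : vF - vL = cF ⬝ᵥ vx⁻¹.mulVec cF := by
    rw [hvF, hvL, hcFval, hγF0, hγF1, hγFF]
    field_simp
    ring
  exact ⟨h1, h2, h3, h4, by linarith, by linarith⟩
end
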